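/- arXiv:2604.23206 — 8 statements merged into one kernel-verified Lean document; each statement's English description precedes it below -/
import Mathlib

section
/- For every nonzero integer m and every integer n ≥ 1, the n-th harmonic number satisfies H_n = (1/m) · Σ_{k=1}^{n} ((-1)^{k+1}/k) · C(m·k, k) · C(n + (m-1)·k, n - k), where the equality is an identity of rational numbers. -/
/-- Generalized binomial coefficient `C(a, b) = a(a-1)⋯(a-b+1)/b!` for `a : ℚ`, `b : ℕ`. -/
noncomputable def gchoose (a : ℚ) (b : ℕ) : ℚ :=
  (∏ i ∈ Finset.range b, (a - i)) / (Nat.factorial b)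

open Finset

namespace Bala

lemma gchoose_zero (a : ℚ) : gchoose a 0 = 1 := by simp [gchoose]

lemma gchoose_succ_right (a : ℚ) (b : ℕ) :
    gchoose a (b + 1) = (a - b) / (b + 1) * gchoose a b := by
  unfold gchoose
  rw [Finset.prod_range_succ, Nat.factorial_succ]
  push_cast
  field_simp

lemma gchoose_succ_left (a : ℚ) (b : ℕ) :
    gchoose a (b + 1) = a / (b + 1) * gchoose (a - 1) b := by
  unfold gchoose
  rw [Finset.prod_range_succ', Nat.factorial_succ]
  have h : ∀ i ∈ Finset.range b, (a - (↑(i + 1) : ℚ)) = (a - 1) - i := by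
    intro i _; push_cast; ring
  rw [Finset.prod_congr rfl h]
  push_cast
  field_simp
  ring

lemma gchoose_pascal (a : ℚ) (b : ℕ) :
    gchoose a (b + 1) = gchoose (a - 1) (b + 1) + gchoose (a - 1) b := by
  rw [gchoose_succ_left, gchoose_succ_right]
  have hb : ((b : ℚ) + 1) ≠ 0 := by positivity
  field_simp
  ring

lemma gchoose_neg (a : ℚ) (b : ℕ) :
    gchoose a b = (-1) ^ b * gchoose ((b : ℚ) - 1 - a) b := by
  induction b with
  | zero => simp [gchoose_zero]
  | succ b ih =>
    rw [gchoose_succ_right a b, ih]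
    have : gchoose ((↑(b + 1) : ℚ) - 1 - a) (b + 1)
        = ((↑(b+1):ℚ) - 1 - a) / (b + 1) * gchoose ((b:ℚ) - 1 - a) b := by
      have := gchoose_succ_left ((↑(b + 1) : ℚ) - 1 - a) b
      rw [this]; push_cast; ring_nf
    rw [this]
    push_cast
    have hb : ((b : ℚ) + 1) ≠ 0 := by positivity
    field_simp
    ring

lemma gchoose_zero_left (n : ℕ) (hn : 1 ≤ n) : gchoose 0 n = 0 := by
  obtain ⟨j, rfl⟩ := Nat.exists_eq_add_of_le hn
  rw [add_comm, gchoose_succ_left]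
  simp

lemma gchoose_self (n : ℕ) : gchoose (n : ℚ) n = 1 := by
  induction n with
  | zero => simp [gchoose_zero]
  | succ n ih =>
    rw [gchoose_succ_left]
    push_cast
    have : (n : ℚ) + 1 - 1 = n := by ring
    rw [this, ih]
    have hb : ((n : ℚ) + 1) ≠ 0 := by positivity
    field_simp

lemma gchoose_neg_one (n : ℕ) : gchoose (-1) n = (-1) ^ n := by
  rw [gchoose_neg]
  have : ((n : ℚ) - 1 - (-1)) = n := by ring
  rw [this, gchoose_self, mul_one]

/-- coefficient family: `f k r = [y^k] (1+x)^r` where `y = x(1+x)^{m-1}`. -/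
noncomputable def ff (m : ℤ) (k : ℕ) (r : ℚ) : ℚ :=
  if k = 0 then 1 else r / k * gchoose ((1 - m) * k + r - 1) (k - 1)

lemma ff_zero (m : ℤ) (r : ℚ) : ff m 0 r = 1 := by simp [ff]

lemma ff_succ (m : ℤ) (k : ℕ) (r : ℚ) :
    ff m (k + 1) r = r / (k + 1) * gchoose ((1 - m) * (k + 1) + r - 1) k := by
  simp [ff]

lemma ff_zero_right (m : ℤ) (k : ℕ) (hk : 1 ≤ k) : ff m k 0 = 0 := by
  obtain ⟨j, rfl⟩ := Nat.exists_eq_add_of_le hk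
  rw [add_comm, ff_succ]
  simp

/-- L2: Pascal-type recurrence for `ff` in `r`. -/
lemma ff_step (m : ℤ) (k : ℕ) (r : ℚ) :
    ff m (k + 1) (r + 1) = ff m (k + 1) r + ff m k (r + 1 - m) := by
  cases k with
  | zero =>
    rw [ff_succ, ff_succ, ff_zero]
    push_cast
    simp [gchoose_zero]
  | succ j =>
    rw [ff_succ, ff_succ, ff_succ]
    have e1 : (1 - (m:ℚ)) * (↑(j + 1) + 1) + (r + 1) - 1
        = ((1 - m) * (↑(j+1) + 1) + r - 1) + 1 := by push_cast; ring
    have e2 : (1 - (m:ℚ)) * (j + 1) + (r + 1 - m) - 1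
        = (1 - m) * (↑(j + 1) + 1) + r - 1 := by push_cast; ring
    rw [e1, e2]
    set A : ℚ := (1 - (m:ℚ)) * (↑(j+1) + 1) + r - 1 with hA
    rw [gchoose_pascal (A + 1) j]
    have : A + 1 - 1 = A := by ring
    rw [this]
    have habs : gchoose A (j + 1) = (A - j) / (j + 1) * gchoose A j :=
      gchoose_succ_right A j
    rw [habs]
    have hAj : A - (j:ℚ) = r + 1 - m * (j + 2) := by rw [hA]; push_cast; ring
    rw [hAj]
    have h1 : ((j:ℚ) + 1) ≠ 0 := by positivity
    have h2 : ((j:ℚ) + 2) ≠ 0 := by positivity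
    have hj2 : ((j:ℚ) + 1 + 1) = (j:ℚ) + 2 := by ring
    push_cast
    rw [hj2]
    field_simp
    ring

/-- L3: absorption splitting of `gchoose ((1-m)k + r) k`. -/
lemma gchoose_split (m : ℤ) (k : ℕ) (r : ℚ) :
    gchoose ((1 - m) * (k + 1) + r) (k + 1)
      = ff m (k + 1) r + (1 - m) * gchoose ((1 - m) * (k + 1) + r - 1) k := by
  rw [ff_succ, gchoose_succ_left]
  have e : (1 - (m:ℚ)) * (↑k + 1) + r - 1 = (1 - m) * (k + 1) + r - 1 := by push_cast; ring
  rw [e]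
  have h1 : ((k:ℚ) + 1) ≠ 0 := by positivity
  field_simp
  ring

/-- L4 : `P_r · (1+x)^c = (1+x)^{r+c}` coefficientwise. -/
lemma sum_ff (m : ℤ) (n : ℕ) :
    ∀ (r : ℤ) (c : ℚ), ∑ k ∈ range (n + 1), ff m k r * gchoose (((m:ℚ) - 1) * k + c) (n - k)
      = gchoose ((r : ℚ) + c) n := by
  induction n with
  | zero =>
    intro r c
    simp [ff_zero, gchoose_zero]
  | succ N IH =>
    -- key step identity, for any integer r and rational c
    have key : ∀ (r : ℤ) (c : ℚ),
        ∑ k ∈ range (N + 2), ff m k ((r:ℚ) + 1) * gchoose (((m:ℚ) - 1) * k + c) (N + 1 - k)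
        = (∑ k ∈ range (N + 2), ff m k (r:ℚ) * gchoose (((m:ℚ) - 1) * k + c) (N + 1 - k))
          + gchoose (((r + 1 - m : ℤ) : ℚ) + (c + (m - 1))) N := by
      intro r c
      rw [Finset.sum_range_succ' _ (N + 1), Finset.sum_range_succ' _ (N + 1)]
      have hsplit : ∀ k ∈ range (N + 1),
          ff m (k + 1) ((r:ℚ) + 1) * gchoose (((m:ℚ) - 1) * (↑(k + 1):ℚ) + c) (N + 1 - (k + 1))
          = ff m (k + 1) (r:ℚ) * gchoose (((m:ℚ) - 1) * (↑(k + 1):ℚ) + c) (N + 1 - (k + 1))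
            + ff m k ((r:ℚ) + 1 - m) * gchoose (((m:ℚ) - 1) * k + (c + (m - 1))) (N - k) := by
        intro k hk
        rw [ff_step]
        have e1 : ((m:ℚ) - 1) * (↑(k + 1):ℚ) + c = ((m:ℚ) - 1) * k + (c + (m - 1)) := by push_cast; ring
        have e2 : N + 1 - (k + 1) = N - k := by omega
        rw [add_mul]
        congr 1
        rw [e1, e2]
      rw [Finset.sum_congr rfl hsplit, Finset.sum_add_distrib]
      have hIH := IH (r + 1 - m) (c + ((m:ℚ) - 1))
      push_cast at hIH ⊢
      rw [hIH]
      simp [ff_zero]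
      ring
    intro r c
    induction r using Int.induction_on with
    | zero =>
      push_cast
      rw [Finset.sum_eq_single 0]
      · simp [ff_zero, gchoose_zero]
      · intro k _ hk
        have : 1 ≤ k := Nat.one_le_iff_ne_zero.mpr hk
        rw [ff_zero_right m k this, zero_mul]
      · intro h; simp at h
    | succ i ihp =>
      have hk := key i c
      push_cast at hk ihp ⊢
      rw [hk, ihp]
      have hp : gchoose ((i:ℚ) + 1 + c) (N + 1)
          = gchoose ((i:ℚ) + 1 + c - 1) (N + 1) + gchoose ((i:ℚ) + 1 + c - 1) N :=
        gchoose_pascal _ _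
      have e1 : (i:ℚ) + 1 + c - 1 = (i:ℚ) + c := by ring
      have e2 : (i:ℚ) + 1 - m + (c + (m - 1)) = (i:ℚ) + c := by ring
      rw [e1] at hp
      rw [e2, hp]
    | pred i ihn =>
      have hk := key (-i - 1) c
      push_cast at hk ihn ⊢
      have e0 : -(i:ℚ) - 1 + 1 = -(i:ℚ) := by ring
      rw [e0, ihn] at hk
      have hp := gchoose_pascal (-(i:ℚ) + c) N
      have e2 : -(i:ℚ) - (m:ℚ) + (c + ((m:ℚ) - 1)) = -(i:ℚ) + c - 1 := by ring
      rw [e2] at hk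
      have e1 : -(i:ℚ) + c - 1 = -(i:ℚ) - 1 + c := by ring
      rw [e1] at hk hp
      linarith [hk, hp]

/-- RHS recurrence for geometric-convolution sums. -/
lemma rhs_rec (m : ℤ) (N : ℕ) (w : ℚ) :
    ∑ j ∈ range (N + 2), gchoose (w + 1) j * (-(m:ℚ)) ^ (N + 1 - j)
      = gchoose w (N + 1) + (1 - m) * ∑ j ∈ range (N + 1), gchoose w j * (-(m:ℚ)) ^ (N - j) := by
  rw [Finset.sum_range_succ' _ (N + 1)]
  have hsplit : ∀ k ∈ range (N + 1),
      gchoose (w + 1) (k + 1) * (-(m:ℚ)) ^ (N + 1 - (k + 1))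
      = gchoose w (k + 1) * (-(m:ℚ)) ^ (N + 1 - (k + 1)) + gchoose w k * (-(m:ℚ)) ^ (N - k) := by
    intro k hk
    have hp : gchoose (w + 1) (k + 1) = gchoose w (k + 1) + gchoose w k := by
      have := gchoose_pascal (w + 1) k
      simpa using this
    have e2 : N + 1 - (k + 1) = N - k := by omega
    rw [hp, e2, add_mul]
  rw [Finset.sum_congr rfl hsplit, Finset.sum_add_distrib]
  have e3 : ∑ k ∈ range (N + 1), gchoose w (k + 1) * (-(m:ℚ)) ^ (N + 1 - (k + 1))
        + gchoose (w + 1) 0 * (-(m:ℚ)) ^ (N + 1 - 0)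
      = ∑ k ∈ range (N + 2), gchoose w k * (-(m:ℚ)) ^ (N + 1 - k) := by
    rw [Finset.sum_range_succ' (fun k => gchoose w k * (-(m:ℚ)) ^ (N + 1 - k)) (N + 1)]
    simp [gchoose_zero]
  have e4 : ∑ k ∈ range (N + 2), gchoose w k * (-(m:ℚ)) ^ (N + 1 - k)
      = gchoose w (N + 1) + (-(m:ℚ)) * ∑ j ∈ range (N + 1), gchoose w j * (-(m:ℚ)) ^ (N - j) := by
    rw [Finset.sum_range_succ, Finset.mul_sum]
    have h5 : ∀ k ∈ range (N + 1), gchoose w k * (-(m:ℚ)) ^ (N + 1 - k)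
        = -(m:ℚ) * (gchoose w k * (-(m:ℚ)) ^ (N - k)) := by
      intro k hk
      simp only [Finset.mem_range] at hk
      have : N + 1 - k = (N - k) + 1 := by omega
      rw [this, pow_succ]
      ring
    rw [Finset.sum_congr rfl h5]
    simp
    ring
  linarith [e3, e4]

/-- L5 : Σ C(tk+r,k) C((m-1)k+c, n-k) = Σ_j C(r+1+c,j) (-m)^{n-j}. -/
lemma sum_S (m : ℤ) (n : ℕ) :
    ∀ (r : ℤ) (c : ℚ),
      ∑ k ∈ range (n + 1), gchoose ((1 - (m:ℚ)) * k + r) k * gchoose (((m:ℚ) - 1) * k + c) (n - k)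
      = ∑ j ∈ range (n + 1), gchoose ((r:ℚ) + 1 + c) j * (-(m:ℚ)) ^ (n - j) := by
  induction n with
  | zero => intro r c; simp [gchoose_zero]
  | succ N IH =>
    intro r c
    rw [Finset.sum_range_succ' _ (N + 1)]
    have hsplit : ∀ k ∈ range (N + 1),
        gchoose ((1 - (m:ℚ)) * (↑(k + 1):ℚ) + r) (k + 1) * gchoose (((m:ℚ) - 1) * (↑(k + 1):ℚ) + c) (N + 1 - (k + 1))
        = ff m (k + 1) (r:ℚ) * gchoose (((m:ℚ) - 1) * (↑(k + 1):ℚ) + c) (N + 1 - (k + 1))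
          + (1 - (m:ℚ)) * (gchoose ((1 - (m:ℚ)) * k + ((r:ℚ) - m)) k * gchoose (((m:ℚ) - 1) * k + (c + ((m:ℚ) - 1))) (N - k)) := by
      intro k hk
      have e0 : (1 - (m:ℚ)) * (↑(k + 1):ℚ) + r = (1 - (m:ℚ)) * (↑k + 1) + r := by push_cast; ring
      rw [e0, gchoose_split m k (r:ℚ)]
      have e1 : (1 - (m:ℚ)) * (↑k + 1) + (r:ℚ) - 1 = (1 - (m:ℚ)) * k + ((r:ℚ) - m) := by push_cast; ring
      have e2 : ((m:ℚ) - 1) * (↑(k + 1):ℚ) + c = ((m:ℚ) - 1) * k + (c + ((m:ℚ) - 1)) := by push_cast; ring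
      have e3 : N + 1 - (k + 1) = N - k := by omega
      have e4 : (1 - (m:ℚ)) * (↑k + 1) = (1 - (m:ℚ)) * (↑(k+1):ℚ) := by push_cast; ring
      rw [e1, add_mul]
      congr 1
      rw [e2, e3]; ring
    rw [Finset.sum_congr rfl hsplit, Finset.sum_add_distrib]
    -- first part: complete to the full `ff` sum
    have hff : ∑ k ∈ range (N + 1), ff m (k + 1) (r:ℚ) * gchoose (((m:ℚ) - 1) * (↑(k + 1):ℚ) + c) (N + 1 - (k + 1))
        + gchoose ((1 - (m:ℚ)) * (↑(0:ℕ):ℚ) + r) 0 * gchoose (((m:ℚ) - 1) * (↑(0:ℕ):ℚ) + c) (N + 1 - 0)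
        = gchoose ((r:ℚ) + c) (N + 1) := by
      have := sum_ff m (N + 1) r c
      rw [Finset.sum_range_succ' _ (N + 1)] at this
      rw [← this]
      congr 1
      · simp [gchoose_zero, ff_zero]
    have hS : ∑ k ∈ range (N + 1), (1 - (m:ℚ)) * (gchoose ((1 - (m:ℚ)) * k + ((r:ℚ) - m)) k * gchoose (((m:ℚ) - 1) * k + (c + ((m:ℚ) - 1))) (N - k))
        = (1 - (m:ℚ)) * ∑ j ∈ range (N + 1), gchoose ((r:ℚ) + c) j * (-(m:ℚ)) ^ (N - j) := by
      rw [← Finset.mul_sum]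
      have := IH (r - m) (c + ((m:ℚ) - 1))
      push_cast at this
      rw [this]
      have e : (r:ℚ) - m + 1 + (c + ((m:ℚ) - 1)) = (r:ℚ) + c := by ring
      rw [e]
    have hr := rhs_rec m N ((r:ℚ) + c)
    have e : (r:ℚ) + c + 1 = (r:ℚ) + 1 + c := by ring
    rw [e] at hr
    linarith [hff, hS, hr]

/-- helper: sum over range (n+1) = term at 0 + sum over Icc 1 n -/
lemma sum_range_eq_Icc (f : ℕ → ℚ) (n : ℕ) :
    ∑ k ∈ range (n + 1), f k = f 0 + ∑ k ∈ Icc 1 n, f k := by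
  induction n with
  | zero => simp
  | succ n ih =>
    rw [Finset.sum_range_succ, ih, Finset.sum_Icc_succ_top (by omega : 1 ≤ n + 1)]
    ring

/-- E_c : alternating Rothe-type identity. -/
lemma sum_E (m : ℤ) (n : ℕ) (c : ℚ) :
    ∑ k ∈ range (n + 1), (-1:ℚ) ^ k * gchoose ((m:ℚ) * k) k * gchoose (((m:ℚ) - 1) * k + c) (n - k)
      = ∑ j ∈ range (n + 1), gchoose c j * (-(m:ℚ)) ^ (n - j) := by
  have h := sum_S m n (-1) c
  have hterm : ∀ k ∈ range (n + 1),
      gchoose ((1 - (m:ℚ)) * k + ((-1 : ℤ):ℚ)) k * gchoose (((m:ℚ) - 1) * k + c) (n - k)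
      = (-1:ℚ) ^ k * gchoose ((m:ℚ) * k) k * gchoose (((m:ℚ) - 1) * k + c) (n - k) := by
    intro k _
    have hneg := gchoose_neg ((1 - (m:ℚ)) * k + ((-1 : ℤ):ℚ)) k
    have e : (k:ℚ) - 1 - ((1 - (m:ℚ)) * k + ((-1 : ℤ):ℚ)) = (m:ℚ) * k := by push_cast; ring
    rw [e] at hneg
    rw [hneg]
  rw [Finset.sum_congr rfl hterm] at h
  rw [h]
  apply Finset.sum_congr rfl
  intro j _
  congr 2
  push_cast
  ring

lemma sum_E0 (m : ℤ) (n : ℕ) :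
    ∑ k ∈ range (n + 1), (-1:ℚ) ^ k * gchoose ((m:ℚ) * k) k * gchoose (((m:ℚ) - 1) * k) (n - k)
      = (-(m:ℚ)) ^ n := by
  have h := sum_E m n 0
  simp only [add_zero] at h
  rw [h]
  rw [Finset.sum_eq_single 0]
  · simp [gchoose_zero]
  · intro j _ hj
    rw [gchoose_zero_left j (Nat.one_le_iff_ne_zero.mpr hj), zero_mul]
  · intro h0; simp at h0

lemma sum_Em1 (m : ℤ) (N : ℕ) :
    ∑ k ∈ range (N + 1), (-1:ℚ) ^ k * gchoose ((m:ℚ) * k) k * gchoose (((m:ℚ) - 1) * k - 1) (N - k)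
      = (-1:ℚ) ^ N * ∑ i ∈ range (N + 1), (m:ℚ) ^ i := by
  have h := sum_E m N (-1)
  have e : ∀ k ∈ range (N+1), (-1:ℚ) ^ k * gchoose ((m:ℚ) * k) k * gchoose (((m:ℚ) - 1) * k + (-1)) (N - k)
      = (-1:ℚ) ^ k * gchoose ((m:ℚ) * k) k * gchoose (((m:ℚ) - 1) * k - 1) (N - k) := by
    intro k _; congr 2; ring
  rw [Finset.sum_congr rfl e] at h
  rw [h]
  have e2 : ∀ j ∈ range (N + 1), gchoose (-1) j * (-(m:ℚ)) ^ (N - j)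
      = (-1:ℚ) ^ N * (m:ℚ) ^ (N - j) := by
    intro j hj
    simp only [Finset.mem_range] at hj
    rw [gchoose_neg_one]
    have : (-(m:ℚ)) ^ (N - j) = (-1:ℚ) ^ (N - j) * (m:ℚ) ^ (N - j) := by
      rw [neg_pow]
    rw [this]
    have : (-1:ℚ) ^ j * ((-1:ℚ) ^ (N - j) * (m:ℚ) ^ (N - j)) = (-1:ℚ)^(j + (N - j)) * (m:ℚ)^(N-j) := by
      rw [pow_add]; ring
    rw [this]
    have : j + (N - j) = N := by omega
    rw [this]
  rw [Finset.sum_congr rfl e2, ← Finset.mul_sum]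
  congr 1
  rw [← Finset.sum_range_reflect]
  apply Finset.sum_congr rfl
  intro i hi
  simp only [Finset.mem_range] at hi
  congr 1
  omega

/-- absorption for the anchor: `(j+1) * C(a, j+1) = a * C(a-1, j)`. -/
lemma gchoose_absorb (a : ℚ) (j : ℕ) :
    ((j:ℚ) + 1) * gchoose a (j + 1) = a * gchoose (a - 1) j := by
  rw [gchoose_succ_left]
  have : ((j:ℚ) + 1) ≠ 0 := by positivity
  field_simp

/-- The anchor evaluation `A(n)`. -/
lemma anchor (m : ℤ) (n : ℕ) (hn : 1 ≤ n) :
    (n:ℚ) * ∑ k ∈ Icc 1 n, (-1:ℚ) ^ (k + 1) / k * gchoose ((m:ℚ) * k) k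
          * gchoose (((m:ℚ) - 1) * k) (n - k)
      = (-1:ℚ) ^ (n - 1) * m := by
  -- termwise split n = k + (n - k)
  have hsplit : ∀ k ∈ Icc 1 n,
      (n:ℚ) * ((-1:ℚ) ^ (k + 1) / k * gchoose ((m:ℚ) * k) k * gchoose (((m:ℚ) - 1) * k) (n - k))
      = (-1:ℚ) ^ (k + 1) * gchoose ((m:ℚ) * k) k * gchoose (((m:ℚ) - 1) * k) (n - k)
        + (-1:ℚ) ^ (k + 1) / k * gchoose ((m:ℚ) * k) k
          * (((n - k : ℕ):ℚ) * gchoose (((m:ℚ) - 1) * k) (n - k)) := by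
    intro k hk
    simp only [Finset.mem_Icc] at hk
    have hk1 : (1:ℕ) ≤ k := hk.1
    have hkn : k ≤ n := hk.2
    have hcast : ((n - k : ℕ):ℚ) = (n:ℚ) - k := by
      have := Nat.cast_sub hkn (R := ℚ); exact this
    have hkq : (k:ℚ) ≠ 0 := by
      have : 0 < k := hk1
      positivity
    rw [hcast]
    field_simp
    ring
  rw [Finset.mul_sum, Finset.sum_congr rfl hsplit, Finset.sum_add_distrib]
  -- Sum1
  have h1 : ∑ k ∈ Icc 1 n, (-1:ℚ) ^ (k + 1) * gchoose ((m:ℚ) * k) k * gchoose (((m:ℚ) - 1) * k) (n - k)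
      = -(-(m:ℚ)) ^ n := by
    have hE := sum_E0 m n
    rw [sum_range_eq_Icc] at hE
    simp only [Nat.cast_zero, mul_zero, gchoose_zero, one_mul, pow_zero, Nat.sub_zero] at hE
    rw [gchoose_zero_left n hn, zero_add] at hE
    have : ∀ k ∈ Icc 1 n, (-1:ℚ) ^ (k + 1) * gchoose ((m:ℚ) * k) k * gchoose (((m:ℚ) - 1) * k) (n - k)
        = -((-1:ℚ) ^ k * gchoose ((m:ℚ) * k) k * gchoose (((m:ℚ) - 1) * k) (n - k)) := by
      intro k _; rw [pow_succ]; ring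
    rw [Finset.sum_congr rfl this, Finset.sum_neg_distrib, hE]
  rw [h1]
  -- Sum2
  have h2 : ∑ k ∈ Icc 1 n, (-1:ℚ) ^ (k + 1) / k * gchoose ((m:ℚ) * k) k
        * (((n - k : ℕ):ℚ) * gchoose (((m:ℚ) - 1) * k) (n - k))
      = -(((m:ℚ) - 1) * ((-1:ℚ) ^ (n - 1) * (∑ i ∈ range n, (m:ℚ) ^ i - 1))) := by
    obtain ⟨N, rfl⟩ : ∃ N, n = N + 1 := ⟨n - 1, by omega⟩
    rw [Finset.sum_Icc_succ_top (by omega : 1 ≤ N + 1)]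
    have htop : (-1:ℚ) ^ (N + 1 + 1) / ((↑(N+1):ℚ)) * gchoose ((m:ℚ) * (↑(N+1):ℚ)) (N + 1)
        * (((N + 1 - (N + 1) : ℕ):ℚ) * gchoose (((m:ℚ) - 1) * (↑(N+1):ℚ)) (N + 1 - (N + 1))) = 0 := by
      simp
    rw [htop, add_zero]
    -- now for k ∈ Icc 1 N : n - k = (N - k) + 1
    have habs : ∀ k ∈ Icc 1 N,
        (-1:ℚ) ^ (k + 1) / k * gchoose ((m:ℚ) * k) k
          * (((N + 1 - k : ℕ):ℚ) * gchoose (((m:ℚ) - 1) * k) (N + 1 - k))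
        = ((m:ℚ) - 1) * (-((-1:ℚ) ^ k * gchoose ((m:ℚ) * k) k * gchoose (((m:ℚ) - 1) * k - 1) (N - k))) := by
      intro k hk
      simp only [Finset.mem_Icc] at hk
      have e1 : N + 1 - k = (N - k) + 1 := by omega
      rw [e1]
      have e2 : ((N - k + 1 : ℕ):ℚ) = ((N - k : ℕ):ℚ) + 1 := by push_cast; ring
      rw [e2, gchoose_absorb (((m:ℚ) - 1) * k) (N - k)]
      have hkq : (k:ℚ) ≠ 0 := by
        have : 0 < k := hk.1; positivity
      have e3 : (-1:ℚ) ^ (k+1) = -(-1:ℚ)^k := by rw [pow_succ]; ring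
      rw [e3]
      field_simp
    rw [Finset.sum_congr rfl habs, ← Finset.mul_sum, Finset.sum_neg_distrib]
    have hE := sum_Em1 m N
    rw [sum_range_eq_Icc] at hE
    simp only [Nat.cast_zero, mul_zero, gchoose_zero, one_mul, pow_zero, Nat.sub_zero, zero_sub] at hE
    rw [gchoose_neg_one N] at hE
    have hIcc : ∑ k ∈ Icc 1 N, (-1:ℚ) ^ k * gchoose ((m:ℚ) * k) k * gchoose (((m:ℚ) - 1) * k - 1) (N - k)
        = (-1:ℚ) ^ N * ∑ i ∈ range (N + 1), (m:ℚ) ^ i - (-1:ℚ) ^ N := by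
      linarith [hE]
    rw [hIcc]
    have : (N + 1 - 1 : ℕ) = N := by omega
    rw [this]
    ring
  rw [h2]
  -- final algebra: -(-m)^n - (m-1)((-1)^{n-1}(Σ - 1)) = (-1)^{n-1} m
  have hgeom : (∑ i ∈ range n, (m:ℚ) ^ i) * ((m:ℚ) - 1) = (m:ℚ) ^ n - 1 := geom_sum_mul (m:ℚ) n
  have hneg : (-(m:ℚ)) ^ n = (-1:ℚ) ^ n * (m:ℚ) ^ n := by rw [neg_pow]
  obtain ⟨N, rfl⟩ : ∃ N, n = N + 1 := ⟨n - 1, by omega⟩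
  have e : (N + 1 - 1 : ℕ) = N := Nat.succ_sub_one N
  rw [e, hneg, pow_succ]
  linear_combination (-((-1:ℚ) ^ N)) * hgeom

noncomputable def Vsum (m : ℤ) (n j : ℕ) : ℚ :=
  ∑ k ∈ Icc 1 n, (-1:ℚ) ^ (k + 1) / k * gchoose ((m:ℚ) * k) k
    * gchoose ((j:ℚ) + ((m:ℚ) - 1) * k) (n - k)

noncomputable def aval (m : ℤ) : ℕ → ℚ
  | 0 => 0
  | (n + 1) => (-1:ℚ) ^ n * m / (n + 1)

lemma Vsum_zero (m : ℤ) (j : ℕ) : Vsum m 0 j = 0 := by simp [Vsum]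

lemma Vsum_anchor (m : ℤ) (n : ℕ) : Vsum m n 0 = aval m n := by
  cases n with
  | zero => simp [Vsum_zero, aval]
  | succ N =>
    have h := anchor m (N + 1) (by omega)
    have e : ∀ k ∈ Icc 1 (N + 1),
        (-1:ℚ) ^ (k + 1) / k * gchoose ((m:ℚ) * k) k * gchoose (((m:ℚ) - 1) * k) (N + 1 - k)
        = (-1:ℚ) ^ (k + 1) / k * gchoose ((m:ℚ) * k) k
            * gchoose (((0:ℕ):ℚ) + ((m:ℚ) - 1) * k) (N + 1 - k) := by
      intro k _
      norm_num
    rw [Finset.sum_congr rfl e] at h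
    have hn : ((N:ℚ) + 1) ≠ 0 := by positivity
    show Vsum m (N + 1) 0 = (-1:ℚ) ^ N * m / (N + 1)
    have hv : ((N + 1 : ℕ):ℚ) * Vsum m (N + 1) 0 = (-1:ℚ) ^ (N + 1 - 1) * m := h
    have e1 : (N + 1 - 1 : ℕ) = N := Nat.succ_sub_one N
    rw [e1] at hv
    push_cast at hv
    field_simp at hv ⊢
    linarith [hv]

lemma Vsum_rec (m : ℤ) (N j : ℕ) :
    Vsum m (N + 1) (j + 1) = Vsum m (N + 1) j + Vsum m N j := by
  unfold Vsum
  rw [Finset.sum_Icc_succ_top (by omega : 1 ≤ N + 1),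
      Finset.sum_Icc_succ_top (by omega : 1 ≤ N + 1)]
  have htop : ∀ (c : ℚ), gchoose (c + ((m:ℚ) - 1) * (↑(N+1):ℚ)) (N + 1 - (N + 1)) = 1 := by
    intro c
    have : N + 1 - (N + 1) = 0 := by omega
    rw [this, gchoose_zero]
  rw [htop, htop]
  have hsplit : ∀ k ∈ Icc 1 N,
      (-1:ℚ) ^ (k + 1) / k * gchoose ((m:ℚ) * k) k
          * gchoose ((↑(j+1):ℚ) + ((m:ℚ) - 1) * k) (N + 1 - k)
      = (-1:ℚ) ^ (k + 1) / k * gchoose ((m:ℚ) * k) k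
          * gchoose ((j:ℚ) + ((m:ℚ) - 1) * k) (N + 1 - k)
        + (-1:ℚ) ^ (k + 1) / k * gchoose ((m:ℚ) * k) k
          * gchoose ((j:ℚ) + ((m:ℚ) - 1) * k) (N - k) := by
    intro k hk
    simp only [Finset.mem_Icc] at hk
    have e1 : N + 1 - k = (N - k) + 1 := by omega
    rw [e1]
    have hp := gchoose_pascal ((↑(j+1):ℚ) + ((m:ℚ) - 1) * k) (N - k)
    have e2 : (↑(j+1):ℚ) + ((m:ℚ) - 1) * k - 1 = (j:ℚ) + ((m:ℚ) - 1) * k := by push_cast; ring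
    rw [e2] at hp
    rw [hp]
    ring
  rw [Finset.sum_congr rfl hsplit, Finset.sum_add_distrib]
  ring

lemma Vsum_eq (m : ℤ) (j : ℕ) : ∀ n : ℕ,
    Vsum m n j = ∑ i ∈ range (j + 1), (Nat.choose j i : ℚ) * aval m (n - i) := by
  induction j with
  | zero =>
    intro n
    simpa using Vsum_anchor m n
  | succ j ih =>
    intro n
    cases n with
    | zero =>
      rw [Vsum_zero]
      have : ∀ i ∈ range (j + 2), (Nat.choose (j+1) i : ℚ) * aval m (0 - i) = 0 := by
        intro i _
        have : (0 - i : ℕ) = 0 := by omega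
        rw [this]
        simp [aval]
      rw [Finset.sum_congr rfl this]
      simp
    | succ N =>
      rw [Vsum_rec, ih (N + 1), ih N]
      -- RHS manipulation
      rw [Finset.sum_range_succ' (fun i => (Nat.choose (j+1) i : ℚ) * aval m (N + 1 - i)) (j + 1)]
      have e1 : ∀ i ∈ range (j + 1),
          (Nat.choose (j+1) (i+1) : ℚ) * aval m (N + 1 - (i + 1))
          = (Nat.choose j (i+1) : ℚ) * aval m (N - i) + (Nat.choose j i : ℚ) * aval m (N - i) := by
        intro i _
        have e : N + 1 - (i + 1) = N - i := by omega
        rw [e, Nat.choose_succ_succ' j i]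
        push_cast
        ring
      rw [Finset.sum_congr rfl e1, Finset.sum_add_distrib]
      -- Σ_{i<j+1} C(j,i+1) a(N-i) = Σ_{i<j+1} C(j,i) a(N+1-i) - C(j,0) a(N+1)  … via reindex
      have e2 : ∑ i ∈ range (j + 1), (Nat.choose j (i+1) : ℚ) * aval m (N - i)
          = ∑ i ∈ range (j + 1), (Nat.choose j i : ℚ) * aval m (N + 1 - i)
            - (Nat.choose j 0 : ℚ) * aval m (N + 1) := by
      -- peel i=0 from the RHS sum
        rw [Finset.sum_range_succ' (fun i => (Nat.choose j i : ℚ) * aval m (N + 1 - i)) j]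
        have e3 : ∀ i ∈ range j, (Nat.choose j (i+1) : ℚ) * aval m (N + 1 - (i+1))
            = (Nat.choose j (i+1) : ℚ) * aval m (N - i) := by
          intro i _
          have : N + 1 - (i + 1) = N - i := by omega
          rw [this]
        rw [Finset.sum_congr rfl e3]
        rw [Finset.sum_range_succ (fun i => (Nat.choose j (i+1) : ℚ) * aval m (N - i)) j]
        have : (Nat.choose j (j+1) : ℚ) = 0 := by
          norm_cast
          exact Nat.choose_eq_zero_of_lt (by omega)
        rw [this, zero_mul, add_zero]
        have : N + 1 - 0 = N + 1 := rfl
        simp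
      rw [e2]
      have : (Nat.choose (j+1) 0 : ℚ) * aval m (N + 1 - 0) = (Nat.choose j 0 : ℚ) * aval m (N + 1) := by
        simp
      rw [this]
      ring

/-- classical: Σ_{j<n} C(n-1,j) (-1)^j / (j+1) = 1/n -/
lemma classical_sum (n : ℕ) (hn : 1 ≤ n) :
    ∑ j ∈ range n, (Nat.choose (n - 1) j : ℚ) * ((-1:ℚ) ^ j / (j + 1)) = 1 / n := by
  obtain ⟨N, rfl⟩ : ∃ N, n = N + 1 := ⟨n - 1, by omega⟩
  simp only [Nat.add_sub_cancel]
  have key : ∀ j ∈ range (N + 1),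
      (Nat.choose N j : ℚ) * ((-1:ℚ) ^ j / (j + 1))
      = (1 / ((N:ℚ) + 1)) * ((-1:ℚ) ^ j * (Nat.choose (N + 1) (j + 1) : ℚ)) := by
    intro j _
    have h := Nat.add_one_mul_choose_eq N j
    have hq : ((N:ℚ) + 1) * (Nat.choose N j : ℚ) = (Nat.choose (N + 1) (j + 1) : ℚ) * ((j:ℚ) + 1) := by
      exact_mod_cast congrArg (Nat.cast : ℕ → ℚ) h
    have h1 : ((j:ℚ) + 1) ≠ 0 := by positivity
    have h2 : ((N:ℚ) + 1) ≠ 0 := by positivity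
    field_simp
    linear_combination hq
  rw [Finset.sum_congr rfl key, ← Finset.mul_sum]
  have halt := Int.alternating_sum_range_choose (n := N + 1)
  have h0 : (N + 1 ≠ 0) := by omega
  simp only [if_neg h0] at halt
  have hQ : ∑ i ∈ range (N + 2), (-1:ℚ) ^ i * (Nat.choose (N+1) i : ℚ) = 0 := by
    exact_mod_cast congrArg (Int.cast : ℤ → ℚ) halt
  rw [Finset.sum_range_succ' (fun i => (-1:ℚ) ^ i * (Nat.choose (N+1) i : ℚ)) (N + 1)] at hQ
  have e : ∀ i ∈ range (N + 1), (-1:ℚ) ^ (i+1) * (Nat.choose (N+1) (i+1) : ℚ)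
      = -((-1:ℚ) ^ i * (Nat.choose (N+1) (i+1) : ℚ)) := by
    intro i _; rw [pow_succ]; ring
  rw [Finset.sum_congr rfl e, Finset.sum_neg_distrib] at hQ
  simp only [pow_zero, Nat.choose_zero_right, Nat.cast_one, one_mul] at hQ
  have h1 : ∑ i ∈ range (N + 1), (-1:ℚ) ^ i * (Nat.choose (N+1) (i+1) : ℚ) = 1 := by linarith
  rw [h1]
  push_cast
  simp

/-- T(n) = m / n -/
lemma T_val (m : ℤ) (n : ℕ) (hn : 1 ≤ n) : Vsum m n (n - 1) = (m:ℚ) / n := by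
  obtain ⟨N, rfl⟩ : ∃ N, n = N + 1 := ⟨n - 1, by omega⟩
  have e1 : (N + 1 - 1 : ℕ) = N := Nat.succ_sub_one N
  rw [e1, Vsum_eq m N (N + 1)]
  have e2 : ∀ i ∈ range (N + 1), (Nat.choose N i : ℚ) * aval m (N + 1 - i)
      = (fun i => (Nat.choose N (N - i) : ℚ) * ((-1:ℚ) ^ (N - i) * m / ((↑(N - i):ℚ) + 1))) i := by
    intro i hi
    simp only [Finset.mem_range] at hi
    have hiN : i ≤ N := by omega
    have eA : N + 1 - i = (N - i) + 1 := by omega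
    rw [eA]
    have hava : aval m (N - i + 1) = (-1:ℚ) ^ (N - i) * m / ((↑(N - i):ℚ) + 1) := rfl
    simp only [hava]
    rw [Nat.choose_symm hiN]
  rw [Finset.sum_congr rfl e2]
  have hrefl := Finset.sum_range_reflect
    (fun i => (Nat.choose N (N - i) : ℚ) * ((-1:ℚ) ^ (N - i) * m / ((↑(N - i):ℚ) + 1))) (N + 1)
  simp only [Nat.add_sub_cancel] at hrefl
  rw [← hrefl]
  have e6 : ∀ x ∈ range (N + 1),
      (fun i => (Nat.choose N (N - i) : ℚ) * ((-1:ℚ) ^ (N - i) * m / ((↑(N - i):ℚ) + 1))) (N - x)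
      = (m:ℚ) * ((Nat.choose N x : ℚ) * ((-1:ℚ) ^ x / ((x:ℚ) + 1))) := by
    intro x hx
    simp only [Finset.mem_range] at hx
    have eB : N - (N - x) = x := by omega
    simp only [eB]
    ring
  rw [Finset.sum_congr rfl e6, ← Finset.mul_sum]
  have hclass := classical_sum (N + 1) (by omega)
  simp only [Nat.add_sub_cancel] at hclass
  rw [hclass]
  push_cast
  ring

noncomputable def Ssum (m : ℤ) (n : ℕ) : ℚ :=
  ∑ k ∈ Icc 1 n, (-1:ℚ) ^ (k + 1) / k * gchoose ((m:ℚ) * k) k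
    * gchoose ((n:ℚ) + ((m:ℚ) - 1) * k) (n - k)

lemma Ssum_rec (m : ℤ) (N : ℕ) :
    Ssum m (N + 1) = Vsum m (N + 1) N + Ssum m N := by
  unfold Ssum Vsum
  rw [Finset.sum_Icc_succ_top (by omega : 1 ≤ N + 1),
      Finset.sum_Icc_succ_top (by omega : 1 ≤ N + 1)]
  have htop : ∀ (c : ℚ), gchoose (c + ((m:ℚ) - 1) * (↑(N+1):ℚ)) (N + 1 - (N + 1)) = 1 := by
    intro c
    have : N + 1 - (N + 1) = 0 := by omega
    rw [this, gchoose_zero]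
  rw [htop, htop]
  have hsplit : ∀ k ∈ Icc 1 N,
      (-1:ℚ) ^ (k + 1) / k * gchoose ((m:ℚ) * k) k
          * gchoose ((↑(N+1):ℚ) + ((m:ℚ) - 1) * k) (N + 1 - k)
      = (-1:ℚ) ^ (k + 1) / k * gchoose ((m:ℚ) * k) k
          * gchoose ((N:ℚ) + ((m:ℚ) - 1) * k) (N + 1 - k)
        + (-1:ℚ) ^ (k + 1) / k * gchoose ((m:ℚ) * k) k
          * gchoose ((N:ℚ) + ((m:ℚ) - 1) * k) (N - k) := by
    intro k hk
    simp only [Finset.mem_Icc] at hk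
    have e1 : N + 1 - k = (N - k) + 1 := by omega
    rw [e1]
    have hp := gchoose_pascal ((↑(N+1):ℚ) + ((m:ℚ) - 1) * k) (N - k)
    have e2 : (↑(N+1):ℚ) + ((m:ℚ) - 1) * k - 1 = (N:ℚ) + ((m:ℚ) - 1) * k := by push_cast; ring
    rw [e2] at hp
    rw [hp]
    ring
  rw [Finset.sum_congr rfl hsplit, Finset.sum_add_distrib]
  ring

lemma Ssum_eq (m : ℤ) (n : ℕ) : Ssum m n = (m:ℚ) * harmonic n := by
  induction n with
  | zero => simp [Ssum, harmonic]
  | succ N ih =>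
    rw [Ssum_rec, ih, harmonic_succ]
    have hT := T_val m (N + 1) (by omega)
    rw [Nat.succ_sub_one] at hT
    rw [hT]
    push_cast
    field_simp
    ring

end Bala

/-- Bala's identity: for every nonzero integer `m` and every `n ≥ 1`,
`H_n = (1/m) · Σ_{k=1}^{n} ((-1)^{k+1}/k) · C(mk, k) · C(n + (m-1)k, n-k)` in `ℚ`. -/
theorem bala_identity (m : ℤ) (hm : m ≠ 0) (n : ℕ) (hn : 1 ≤ n) :
    harmonic n = (1 / (m : ℚ)) * ∑ k ∈ Finset.Icc 1 n,
      ((-1 : ℚ) ^ (k + 1) / (k : ℚ)) * gchoose ((m : ℚ) * k) k *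
        gchoose ((n : ℚ) + ((m : ℚ) - 1) * k) (n - k) := by
  have h := Bala.Ssum_eq m n
  unfold Bala.Ssum at h
  rw [h]
  have hmq : (m:ℚ) ≠ 0 := Int.cast_ne_zero.mpr hm
  field_simp
end

section
/- For every complex number m ≠ 0 and every integer n ≥ 1, H_n = (1/m) · Σ_{k=1}^{n} ((-1)^{k+1}/k) · C(m·k, k) · C(n + (m-1)·k, n - k), where the equality is an identity of complex numbers. -/
/-- Generalized binomial coefficient `C(a, b) = a(a-1)⋯(a-b+1)/b!` for `a : ℂ`, `b : ℕ`. -/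
noncomputable def gchooseC (a : ℂ) (b : ℕ) : ℂ :=
  (∏ i ∈ Finset.range b, (a - i)) / (Nat.factorial b)

open Finset Polynomial


lemma fact_ne (b : ℕ) : ((Nat.factorial b : ℂ)) ≠ 0 := by
  exact_mod_cast Nat.cast_ne_zero.2 (Nat.factorial_ne_zero b)

lemma gchooseC_zero (a : ℂ) : gchooseC a 0 = 1 := by simp [gchooseC]

lemma prod_sub_succ' (a : ℂ) (b : ℕ) :
    ∏ i ∈ Finset.range (b+1), (a - i) = a * ∏ i ∈ Finset.range b, (a - 1 - i) := by
  rw [Finset.prod_range_succ']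
  push_cast
  simp only [show ∀ i:ℕ, a - ((i:ℂ) + 1) = a - 1 - (i:ℂ) from fun i => by ring]
  ring

lemma gchooseC_succ_left (a : ℂ) (b : ℕ) :
    gchooseC a (b+1) = a / (b+1) * gchooseC (a-1) b := by
  rw [gchooseC, gchooseC, prod_sub_succ', Nat.factorial_succ]
  have hb : ((b:ℂ)+1) ≠ 0 := Nat.cast_add_one_ne_zero b
  push_cast
  field_simp
  try ring

lemma gchooseC_pascal (a : ℂ) (b : ℕ) :
    gchooseC a (b+1) = gchooseC (a-1) (b+1) + gchooseC (a-1) b := by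
  have hb : ((b:ℂ)+1) ≠ 0 := Nat.cast_add_one_ne_zero b
  rw [gchooseC, gchooseC, gchooseC, prod_sub_succ', Finset.prod_range_succ,
    Nat.factorial_succ]
  push_cast
  rw [div_add_div _ _ (by exact mul_ne_zero hb (fact_ne b)) (fact_ne b)]
  rw [div_eq_div_iff (mul_ne_zero hb (fact_ne b)) ?_]
  · ring
  · exact mul_ne_zero (mul_ne_zero hb (fact_ne b)) (fact_ne b)

lemma gchooseC_neg (a : ℂ) (b : ℕ) :
    gchooseC (-a) b = (-1)^b * gchooseC (a + b - 1) b := by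
  rw [gchooseC, gchooseC]
  rw [show ((-1:ℂ))^b * ((∏ i ∈ Finset.range b, (a + b - 1 - i)) / (Nat.factorial b : ℂ))
      = ((-1)^b * ∏ i ∈ Finset.range b, (a + b - 1 - i)) / (Nat.factorial b : ℂ) by ring]
  congr 1
  induction b generalizing a with
  | zero => simp
  | succ b ih =>
    rw [Finset.prod_range_succ, ih]
    have h2 := prod_sub_succ' (a + b) b
    push_cast
    simp only [show ∀ i:ℕ, a + ((b:ℂ)+1) - 1 - (i:ℂ) = (a + (b:ℂ)) - (i:ℂ) from fun i => by ring]
    rw [h2]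
    ring

lemma gchooseC_zero_left (b : ℕ) (hb : 1 ≤ b) : gchooseC 0 b = 0 := by
  rw [gchooseC, Finset.prod_eq_zero (Finset.mem_range.2 (by omega : 0 < b)) (by simp)]
  simp

lemma gchooseC_succ_right (a : ℂ) (b : ℕ) :
    gchooseC a (b+1) = gchooseC a b * (a - b) / (b+1) := by
  rw [gchooseC, gchooseC, Finset.prod_range_succ, Nat.factorial_succ]
  push_cast
  rw [div_mul_eq_mul_div, div_div]
  congr 1
  ring

noncomputable def gcPoly (s c : ℂ) (b : ℕ) : Polynomial ℂ :=
  (∏ i ∈ Finset.range b, (Polynomial.C s * Polynomial.X + Polynomial.C (c - i)))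
    * Polynomial.C (((Nat.factorial b : ℂ))⁻¹)

lemma eval_gcPoly (s c x : ℂ) (b : ℕ) :
    (gcPoly s c b).eval x = gchooseC (s*x + c) b := by
  simp only [gcPoly, gchooseC, Polynomial.eval_mul, Polynomial.eval_prod,
    Polynomial.eval_add, Polynomial.eval_C, Polynomial.eval_X, div_eq_mul_inv]
  congr 1
  exact Finset.prod_congr rfl fun i _ => by ring

noncomputable def ff (z : ℂ) (k : ℕ) (x : ℂ) : ℂ :=
  if k = 0 then 1 else x / k * gchooseC (x + k*z - 1) (k-1)

noncomputable def ffPoly (z : ℂ) (k : ℕ) : Polynomial ℂ :=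
  if k = 0 then 1 else Polynomial.C ((k:ℂ))⁻¹ * Polynomial.X * gcPoly 1 ((k:ℂ)*z - 1) (k-1)

lemma eval_ffPoly (z x : ℂ) (k : ℕ) : (ffPoly z k).eval x = ff z k x := by
  rcases eq_or_ne k 0 with h | h
  · simp [ffPoly, ff, h]
  · simp only [ffPoly, ff, if_neg h, Polynomial.eval_mul, Polynomial.eval_C,
      Polynomial.eval_X, eval_gcPoly]
    rw [show (1:ℂ)*x + ((k:ℂ)*z - 1) = x + k*z - 1 by ring, div_eq_mul_inv, mul_comm x]

lemma ff_zero (z : ℂ) (k : ℕ) (hk : 1 ≤ k) : ff z k 0 = 0 := by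
  simp [ff, Nat.one_le_iff_ne_zero.1 hk]

lemma ff_rec (z x : ℂ) (k : ℕ) (hk : 1 ≤ k) :
    ff z k x = ff z k (x-1) + ff z (k-1) (x+z-1) := by
  match k, hk with
  | 1, _ => simp [ff, gchooseC_zero]
  | (j+2), _ =>
    have hj1 : ((j:ℂ)+1) ≠ 0 := Nat.cast_add_one_ne_zero j
    have hj2 : ((j:ℂ)+2) ≠ 0 := by
      have h0 : ((j+2:ℕ):ℂ) ≠ 0 := Nat.cast_ne_zero.2 (by omega)
      push_cast at h0; exact h0
    simp only [ff, if_neg (by omega : ¬ j+2 = 0), if_neg (by omega : ¬ j+2-1 = 0),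
      show j+2-1 = j+1 from rfl, show j+1-1 = j from rfl]
    push_cast
    rw [show x + ((j:ℂ)+2)*z - 1 = (x + ((j:ℂ)+2)*z - 1) from rfl]
    rw [gchooseC_succ_left (x + ((j:ℂ)+2)*z - 1) j,
      gchooseC_succ_right (x - 1 + ((j:ℂ)+2)*z - 1) j,
      show x - 1 + ((j:ℂ)+2)*z - 1 = (x + ((j:ℂ)+2)*z - 1) - 1 by ring,
      show x + z - 1 + ((j:ℂ)+1)*z - 1 = (x + ((j:ℂ)+2)*z - 1) - 1 by ring]
    set Q := gchooseC (x + ((j:ℂ)+2)*z - 1 - 1) j with hQ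
    field_simp
    ring

lemma HR2 (y z : ℂ) (n : ℕ) (x : ℂ) :
    ∑ k ∈ Finset.range (n+1), ff z k x * gchooseC (y + ((n-k : ℕ):ℂ)*z) (n-k)
      = gchooseC (x + y + (n:ℂ)*z) n := by
  induction n generalizing x with
  | zero => simp [ff, gchooseC_zero]
  | succ n ih =>
    set c : ℕ → ℂ := fun k => gchooseC (y + ((n+1-k : ℕ):ℂ)*z) (n+1-k) with hc
    have step : ∀ x : ℂ,
        (∑ k ∈ Finset.range (n+2), ff z k x * c k) - gchooseC (x + y + ((n:ℂ)+1)*z) (n+1)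
        = (∑ k ∈ Finset.range (n+2), ff z k (x-1) * c k)
            - gchooseC ((x-1) + y + ((n:ℂ)+1)*z) (n+1) := by
      intro x
      have h1 : ∑ k ∈ Finset.range (n+2), ff z k x * c k
          = ∑ k ∈ Finset.range (n+2),
              (ff z k (x-1) * c k + (if k = 0 then 0 else ff z (k-1) (x+z-1) * c k)) := by
        refine Finset.sum_congr rfl fun k _ => ?_
        rcases eq_or_ne k 0 with rfl | hk
        · simp [ff]
        · rw [ff_rec z x k (Nat.one_le_iff_ne_zero.2 hk), if_neg hk]; ring
      have h2 : ∑ k ∈ Finset.range (n+2), (if k = 0 then (0:ℂ) else ff z (k-1) (x+z-1) * c k)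
          = ∑ k ∈ Finset.range (n+1), ff z k (x+z-1) * c (k+1) := by
        rw [Finset.sum_range_succ']
        simp
      have h3 : ∑ k ∈ Finset.range (n+1), ff z k (x+z-1) * c (k+1)
          = gchooseC ((x+z-1) + y + (n:ℂ)*z) n := by
        rw [← ih (x+z-1)]
        refine Finset.sum_congr rfl fun k _ => ?_
        rw [hc]
        simp only [Nat.succ_sub_succ]
      have h4 : gchooseC (x + y + ((n:ℂ)+1)*z) (n+1)
          = gchooseC ((x-1) + y + ((n:ℂ)+1)*z) (n+1)
            + gchooseC ((x+z-1) + y + (n:ℂ)*z) n := by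
        rw [gchooseC_pascal (x + y + ((n:ℂ)+1)*z) n]
        congr 2 <;> ring
      rw [h1, Finset.sum_add_distrib, h2, h3, h4]
      ring
    have base : (∑ k ∈ Finset.range (n+2), ff z k 0 * c k)
        - gchooseC ((0:ℂ) + y + ((n:ℂ)+1)*z) (n+1) = 0 := by
      rw [Finset.sum_eq_single_of_mem 0 (Finset.mem_range.2 (by omega))
        (fun k _ hk => by rw [ff_zero z k (Nat.one_le_iff_ne_zero.2 hk), zero_mul])]
      have : ff z 0 0 = 1 := by simp [ff]
      rw [this, one_mul, hc]
      push_cast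
      rw [show y + ((n:ℂ)+1)*z = (0:ℂ) + y + ((n:ℂ)+1)*z by ring, sub_self]
    have nat_roots : ∀ j : ℕ, (∑ k ∈ Finset.range (n+2), ff z k (j:ℂ) * c k)
        - gchooseC ((j:ℂ) + y + ((n:ℂ)+1)*z) (n+1) = 0 := by
      intro j
      induction j with
      | zero => exact_mod_cast base
      | succ j hj =>
        have hs := step ((j:ℂ)+1)
        rw [show ((j:ℂ)+1) - 1 = (j:ℂ) by ring] at hs
        push_cast
        rw [hs]
        exact hj
    set P : Polynomial ℂ :=
      (∑ k ∈ Finset.range (n+2), ffPoly z k * Polynomial.C (c k))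
        - gcPoly 1 (y + ((n:ℂ)+1)*z) (n+1) with hP
    have hev : ∀ x : ℂ, P.eval x
        = (∑ k ∈ Finset.range (n+2), ff z k x * c k)
            - gchooseC (x + y + ((n:ℂ)+1)*z) (n+1) := by
      intro x
      rw [hP, Polynomial.eval_sub, Polynomial.eval_finset_sum, eval_gcPoly,
        show (1:ℂ)*x + (y + ((n:ℂ)+1)*z) = x + y + ((n:ℂ)+1)*z by ring]
      congr 1
      exact Finset.sum_congr rfl fun k _ => by
        rw [Polynomial.eval_mul, eval_ffPoly, Polynomial.eval_C]
    have hP0 : P = 0 := by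
      refine Polynomial.eq_zero_of_infinite_isRoot P ?_
      refine Set.Infinite.mono ?_
        (Set.infinite_range_of_injective (Nat.cast_injective (R := ℂ)))
      rintro _ ⟨j, rfl⟩
      show P.IsRoot _
      rw [Polynomial.IsRoot, hev]
      exact nat_roots j
    have := hev x
    rw [hP0] at this
    simp only [Polynomial.eval_zero] at this
    have h := (sub_eq_zero.1 this.symm)
    push_cast
    exact h

lemma prod_fact (c : ℕ) : ∏ i ∈ Finset.range c, ((0:ℂ)+1+(i:ℂ)) = (Nat.factorial c : ℂ) := by
  induction c with
  | zero => simp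
  | succ c ih => rw [Finset.prod_range_succ, ih, Nat.factorial_succ]; push_cast; ring

lemma gchooseC_neg_fact (x : ℂ) (c : ℕ) :
    gchooseC (-x) (c+1)
      = -x * ((-1)^c * (∏ i ∈ Finset.range c, (x+1+i)) / (Nat.factorial (c+1))) := by
  rw [gchooseC, Finset.prod_range_succ']
  have : ∀ i ∈ Finset.range c, -x - ((i+1 : ℕ):ℂ) = (-1) * (x+1+i) := by
    intro i _; push_cast; ring
  rw [Finset.prod_congr rfl this, Finset.prod_mul_distrib, Finset.prod_const,
    Finset.card_range]
  push_cast
  ring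

lemma keyL (z : ℂ) (n : ℕ) (hn : 1 ≤ n) :
    ∑ k ∈ Finset.Icc 1 n,
        (1/(k:ℂ)) * gchooseC ((k:ℂ)*z - 1) (k-1) * gchooseC (-((k:ℂ)*z)) (n-k)
      = (-1)^(n+1) / n := by
  obtain ⟨c, rfl⟩ : ∃ c, n = c + 1 := ⟨n - 1, by omega⟩
  set n := c + 1
  -- E2 : main specialized identity
  have E2 : ∀ x : ℂ, gchooseC (-x) n
      + x * ∑ k ∈ Finset.Icc 1 n,
          (1/(k:ℂ)) * gchooseC (x + (k:ℂ)*z - 1) (k-1) * gchooseC (-x - (k:ℂ)*z) (n-k)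
      = 0 := by
    intro x
    have h := HR2 (-x - (n:ℂ)*z) z n x
    rw [show x + (-x - (n:ℂ)*z) + (n:ℂ)*z = 0 by ring, gchooseC_zero_left n (by omega)] at h
    have harg : ∀ k ∈ Finset.range (n+1),
        ff z k x * gchooseC ((-x - (n:ℂ)*z) + ((n-k : ℕ):ℂ)*z) (n-k)
          = ff z k x * gchooseC (-x - (k:ℂ)*z) (n-k) := by
      intro k hk
      have hkn' : k ≤ n := Nat.lt_succ_iff.1 (Finset.mem_range.1 hk)
      rw [Nat.cast_sub hkn',
        show -x - (n:ℂ)*z + ((n:ℂ) - (k:ℂ))*z = -x - (k:ℂ)*z by ring]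
    rw [Finset.sum_congr rfl harg] at h
    have hsplit : Finset.range (n+1) = insert 0 (Finset.Icc 1 n) := by
      ext k; simp only [Finset.mem_range, Finset.mem_insert, Finset.mem_Icc]; omega
    rw [hsplit, Finset.sum_insert (by simp)] at h
    have h0 : ff z 0 x * gchooseC (-x - ((0:ℕ):ℂ)*z) (n-0) = gchooseC (-x) n := by
      simp [ff]
    rw [h0] at h
    have hsum : x * ∑ k ∈ Finset.Icc 1 n,
        (1/(k:ℂ)) * gchooseC (x + (k:ℂ)*z - 1) (k-1) * gchooseC (-x - (k:ℂ)*z) (n-k)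
        = ∑ k ∈ Finset.Icc 1 n, ff z k x * gchooseC (-x - (k:ℂ)*z) (n-k) := by
      rw [Finset.mul_sum]
      refine Finset.sum_congr rfl fun k hk => ?_
      have hk1 : k ≠ 0 := by
        have := (Finset.mem_Icc.1 hk).1; omega
      rw [ff, if_neg hk1]
      ring
    rw [hsum]
    exact h
  -- polynomial equality
  set T : ℂ → ℂ := fun x =>
    (-1)^c * (∏ i ∈ Finset.range c, (x+1+i)) / (Nat.factorial n) with hT
  have hxT : ∀ x : ℂ,
      x * ∑ k ∈ Finset.Icc 1 n,
          (1/(k:ℂ)) * gchooseC (x + (k:ℂ)*z - 1) (k-1) * gchooseC (-x - (k:ℂ)*z) (n-k)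
        = x * T x := by
    intro x
    have := E2 x
    rw [gchooseC_neg_fact x c] at this
    rw [hT]
    simp only []
    linear_combination this
  set Q : Polynomial ℂ :=
    (∑ k ∈ Finset.Icc 1 n, Polynomial.C ((k:ℂ))⁻¹ * gcPoly 1 ((k:ℂ)*z - 1) (k-1)
        * gcPoly (-1) (-((k:ℂ)*z)) (n-k))
      - Polynomial.C ((-1)^c * ((Nat.factorial n : ℂ))⁻¹)
          * ∏ i ∈ Finset.range c, (Polynomial.X + Polynomial.C ((1:ℂ)+i)) with hQ
  have hev : ∀ x : ℂ, Q.eval x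
      = (∑ k ∈ Finset.Icc 1 n,
          (1/(k:ℂ)) * gchooseC (x + (k:ℂ)*z - 1) (k-1) * gchooseC (-x - (k:ℂ)*z) (n-k))
        - T x := by
    intro x
    rw [hQ, Polynomial.eval_sub, Polynomial.eval_finset_sum]
    congr 1
    · refine Finset.sum_congr rfl fun k hk => ?_
      rw [Polynomial.eval_mul, Polynomial.eval_mul, Polynomial.eval_C,
        eval_gcPoly, eval_gcPoly,
        show (1:ℂ)*x + ((k:ℂ)*z - 1) = x + (k:ℂ)*z - 1 by ring,
        show (-1:ℂ)*x + (-((k:ℂ)*z)) = -x - (k:ℂ)*z by ring, one_div]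
    · rw [Polynomial.eval_mul, Polynomial.eval_C, Polynomial.eval_prod, hT]
      simp only [Polynomial.eval_add, Polynomial.eval_X, Polynomial.eval_C]
      rw [div_eq_mul_inv]
      simp only [show ∀ i:ℕ, x + ((1:ℂ)+(i:ℂ)) = x+1+(i:ℂ) from fun i => by ring]
      ring
  have hQ0 : Q = 0 := by
    refine Polynomial.eq_zero_of_infinite_isRoot Q ?_
    have hinj : Function.Injective (fun j : ℕ => (j:ℂ)+1) := by
      intro a b hab
      simp only [add_left_inj] at hab
      exact Nat.cast_injective hab
    refine Set.Infinite.mono ?_ (Set.infinite_range_of_injective hinj)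
    rintro _ ⟨j, rfl⟩
    show Q.IsRoot _
    rw [Polynomial.IsRoot, hev]
    have hx : ((j:ℂ)+1) ≠ 0 := Nat.cast_add_one_ne_zero j
    have h5 := mul_left_cancel₀ hx (hxT ((j:ℂ)+1))
    rw [h5, sub_self]
  have hS0 := hev 0
  rw [hQ0, Polynomial.eval_zero] at hS0
  have hS0' : (∑ k ∈ Finset.Icc 1 n,
      (1/(k:ℂ)) * gchooseC ((0:ℂ) + (k:ℂ)*z - 1) (k-1) * gchooseC (-0 - (k:ℂ)*z) (n-k)) = T 0 :=
    sub_eq_zero.1 hS0.symm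
  rw [Finset.sum_congr rfl (fun k hk => by
    rw [show (0:ℂ) + (k:ℂ)*z - 1 = (k:ℂ)*z - 1 by ring,
      show -(0:ℂ) - (k:ℂ)*z = -((k:ℂ)*z) by ring])] at hS0'
  rw [hS0', hT]
  simp only []
  rw [prod_fact c]
  have hcf : ((c.factorial : ℂ)) ≠ 0 := fact_ne c
  have hnn : ((n:ℕ):ℂ) ≠ 0 := Nat.cast_ne_zero.2 (by omega)
  have h6 : (n.factorial : ℂ) = (n:ℂ) * c.factorial := by
    rw [show n.factorial = (c+1) * c.factorial from Nat.factorial_succ c]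
    push_cast
    rw [show ((n:ℕ):ℂ) = (c:ℂ)+1 from Nat.cast_succ c]
  rw [h6, show ((-1:ℂ))^(n+1) = (-1)^c from by
    rw [show n+1 = c+2 from rfl, pow_succ, pow_succ]; ring]
  rw [div_eq_div_iff (mul_ne_zero hnn hcf) hnn]
  ring

lemma keyL' (z : ℂ) (N : ℕ) (hN : 1 ≤ N) :
    ∑ k ∈ Finset.Icc 1 N,
        ((-1:ℂ)^(k+1)/(k:ℂ)) * gchooseC ((z:ℂ)*k - 1) (k-1)
          * gchooseC ((N:ℂ) - 1 + (z-1)*k) (N-k)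
      = 1/N := by
  have hterm : ∀ k ∈ Finset.Icc 1 N,
      ((-1:ℂ)^(k+1)/(k:ℂ)) * gchooseC ((z:ℂ)*k - 1) (k-1)
          * gchooseC ((N:ℂ) - 1 + (z-1)*k) (N-k)
      = (-1:ℂ)^(N+1) *
        ((1/(k:ℂ)) * gchooseC ((k:ℂ)*z - 1) (k-1) * gchooseC (-((k:ℂ)*z)) (N-k)) := by
    intro k hk
    obtain ⟨hk1, hk2⟩ := Finset.mem_Icc.1 hk
    have hneg := gchooseC_neg ((k:ℂ)*z) (N-k)
    rw [Nat.cast_sub hk2,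
      show (k:ℂ)*z + ((N:ℂ) - (k:ℂ)) - 1 = (N:ℂ) - 1 + (z-1)*k by ring] at hneg
    rw [show (z:ℂ)*(k:ℂ) = (k:ℂ)*z by ring]
    have hsq : ((-1:ℂ))^(N-k) * ((-1:ℂ))^(N-k) = 1 := by
      rw [← pow_add]
      exact Even.neg_one_pow ⟨N-k, rfl⟩
    have h2 : gchooseC ((N:ℂ) - 1 + (z-1)*k) (N-k)
        = (-1:ℂ)^(N-k) * gchooseC (-((k:ℂ)*z)) (N-k) := by
      rw [hneg, ← mul_assoc, hsq, one_mul]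
    rw [h2]
    have h3 : ((-1:ℂ))^(k+1) * ((-1:ℂ))^(N-k) = (-1:ℂ)^(N+1) := by
      rw [← pow_add, show k+1+(N-k) = N+1 by omega]
    calc ((-1:ℂ)^(k+1)/(k:ℂ)) * gchooseC ((k:ℂ)*z - 1) (k-1)
          * ((-1:ℂ)^(N-k) * gchooseC (-((k:ℂ)*z)) (N-k))
        = ((-1:ℂ))^(k+1) * ((-1:ℂ))^(N-k) *
          ((1/(k:ℂ)) * gchooseC ((k:ℂ)*z - 1) (k-1) * gchooseC (-((k:ℂ)*z)) (N-k)) := by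
          ring
      _ = _ := by rw [h3]
  rw [Finset.sum_congr rfl hterm, ← Finset.mul_sum, keyL z N hN, ← mul_div_assoc,
    ← pow_add]
  rw [show ((-1:ℂ))^(N+1+(N+1)) = 1 from Even.neg_one_pow ⟨N+1, rfl⟩]

lemma main_aux (m : ℂ) (n : ℕ) (hn : 1 ≤ n) :
    (harmonic n : ℂ) = ∑ k ∈ Finset.Icc 1 n,
      ((-1:ℂ)^(k+1) / (k:ℂ)) * gchooseC (m*(k:ℂ) - 1) (k-1)
        * gchooseC ((n:ℂ) + (m-1)*k) (n-k) := by
  induction n with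
  | zero => omega
  | succ n ih =>
    rcases Nat.eq_or_lt_of_le hn with h1 | h1
    · -- n + 1 = 1
      have : n = 0 := by omega
      subst this
      rw [show Finset.Icc 1 1 = {1} from rfl]
      simp [harmonic_succ, gchooseC_zero]
    · have hn1 : 1 ≤ n := by omega
      have ihn := ih hn1
      -- split U(n+1)
      have hpas : ∀ k ∈ Finset.Icc 1 (n+1),
          ((-1:ℂ)^(k+1) / (k:ℂ)) * gchooseC (m*(k:ℂ) - 1) (k-1)
            * gchooseC (((n:ℕ)+1:ℂ) + (m-1)*k) (n+1-k)
          = ((-1:ℂ)^(k+1) / (k:ℂ)) * gchooseC (m*(k:ℂ) - 1) (k-1)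
              * gchooseC ((n:ℂ) + (m-1)*k) (n+1-k)
            + (if k ≤ n then ((-1:ℂ)^(k+1) / (k:ℂ)) * gchooseC (m*(k:ℂ) - 1) (k-1)
                * gchooseC ((n:ℂ) + (m-1)*k) (n-k) else 0) := by
        intro k hk
        obtain ⟨hk1, hk2⟩ := Finset.mem_Icc.1 hk
        rcases le_or_gt k n with hkn | hkn
        · rw [if_pos hkn, show n+1-k = (n-k)+1 by omega,
            gchooseC_pascal (((n:ℕ):ℂ)+1 + (m-1)*k) (n-k),
            show ((n:ℕ):ℂ)+1 + (m-1)*(k:ℂ) - 1 = (n:ℂ) + (m-1)*k by ring]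
          ring
        · have hk3 : k = n+1 := by omega
          subst hk3
          rw [if_neg (by omega), show n+1-(n+1) = 0 from by omega, gchooseC_zero,
            gchooseC_zero, add_zero]
      push_cast
      rw [Finset.sum_congr rfl hpas, Finset.sum_add_distrib]
      have hsecond : ∑ k ∈ Finset.Icc 1 (n+1),
          (if k ≤ n then ((-1:ℂ)^(k+1) / (k:ℂ)) * gchooseC (m*(k:ℂ) - 1) (k-1)
              * gchooseC ((n:ℂ) + (m-1)*k) (n-k) else 0)
          = ∑ k ∈ Finset.Icc 1 n, ((-1:ℂ)^(k+1) / (k:ℂ)) * gchooseC (m*(k:ℂ) - 1) (k-1)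
              * gchooseC ((n:ℂ) + (m-1)*k) (n-k) := by
        rw [← Finset.sum_filter,
          show Finset.filter (fun k => k ≤ n) (Finset.Icc 1 (n+1)) = Finset.Icc 1 n from by
            ext k; simp only [Finset.mem_filter, Finset.mem_Icc]; omega]
      have hfirst : ∑ k ∈ Finset.Icc 1 (n+1),
          ((-1:ℂ)^(k+1) / (k:ℂ)) * gchooseC (m*(k:ℂ) - 1) (k-1)
            * gchooseC ((n:ℂ) + (m-1)*k) (n+1-k) = 1/((n:ℂ)+1) := by
        have hK := keyL' m (n+1) (by omega)
        push_cast at hK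
        rw [← hK]
        refine Finset.sum_congr rfl fun k hk => ?_
        rw [show (n:ℂ)+1-1 + (m-1)*(k:ℂ) = (n:ℂ) + (m-1)*k by ring,
          show m*(k:ℂ) = (k:ℂ)*m by ring]
      rw [hsecond, hfirst, ← ihn, harmonic_succ]
      push_cast
      ring

/-- Bala's identity for complex parameter `m ≠ 0`: for every `n ≥ 1`,
`H_n = (1/m) · Σ_{k=1}^{n} ((-1)^{k+1}/k) · C(mk, k) · C(n + (m-1)k, n-k)` in `ℂ`. -/
theorem bala_identity_complex (m : ℂ) (hm : m ≠ 0) (n : ℕ) (hn : 1 ≤ n) :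
    (harmonic n : ℂ) = (1 / m) * ∑ k ∈ Finset.Icc 1 n,
      ((-1 : ℂ) ^ (k + 1) / (k : ℂ)) * gchooseC (m * k) k *
        gchooseC ((n : ℂ) + (m - 1) * k) (n - k) := by
  have hA : ∀ k ∈ Finset.Icc 1 n,
      ((-1 : ℂ) ^ (k + 1) / (k : ℂ)) * gchooseC (m * k) k *
        gchooseC ((n : ℂ) + (m - 1) * k) (n - k)
      = m * (((-1:ℂ)^(k+1) / (k:ℂ)) * gchooseC (m*(k:ℂ) - 1) (k-1)
          * gchooseC ((n:ℂ) + (m-1)*k) (n-k)) := by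
    intro k hk
    obtain ⟨hk1, hk2⟩ := Finset.mem_Icc.1 hk
    obtain ⟨j, rfl⟩ : ∃ j, k = j + 1 := ⟨k - 1, by omega⟩
    have hkc : ((j:ℂ)+1) ≠ 0 := Nat.cast_add_one_ne_zero j
    push_cast
    rw [gchooseC_succ_left (m * ((j:ℂ)+1)) j]
    field_simp
  rw [Finset.sum_congr rfl hA, ← Finset.mul_sum, ← main_aux m n hn]
  field_simp
end

section
/- For every nonzero integer m, there exists a unique formal power series w ∈ ℚ[[u]] with zero constant coefficient satisfying w = u · (1 + w)^m, where for negative m the power (1 + w)^m is taken in the group of units of ℚ[[u]] (the series 1 + w is a unit since its constant coefficient is 1). -/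
open PowerSeries

/-- Integer power of a formal power series over `ℚ`: for nonnegative exponents the ordinary
power, for negative exponents the power of the inverse (`PowerSeries.inv`), which for a unit
(e.g. constant coefficient `1`) coincides with the power taken in the group of units. -/
noncomputable def psZpow (f : PowerSeries ℚ) (m : ℤ) : PowerSeries ℚ :=
  if 0 ≤ m then f ^ m.toNat else f⁻¹ ^ (-m).toNat

noncomputable def Phi (m : ℤ) (w : PowerSeries ℚ) : PowerSeries ℚ :=
  X * psZpow (1 + w) m

lemma constantCoeff_Phi (m : ℤ) (w : PowerSeries ℚ) :
    constantCoeff (Phi m w) = 0 := by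
  simp [Phi]

lemma dvd_pow_sub {f g : PowerSeries ℚ} {n : ℕ} (h : (X : PowerSeries ℚ)^n ∣ f - g)
    (k : ℕ) : (X : PowerSeries ℚ)^n ∣ f^k - g^k := by
  induction k with
  | zero => simp
  | succ k ih =>
    have : f^(k+1) - g^(k+1) = f^k * (f - g) + (f^k - g^k) * g := by ring
    rw [this]
    exact dvd_add (Dvd.dvd.mul_left h _) (Dvd.dvd.mul_right ih _)

lemma dvd_inv_sub {f g : PowerSeries ℚ} {n : ℕ}
    (hf : constantCoeff f ≠ 0) (hg : constantCoeff g ≠ 0)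
    (h : (X : PowerSeries ℚ)^n ∣ f - g) : (X : PowerSeries ℚ)^n ∣ f⁻¹ - g⁻¹ := by
  have key : f⁻¹ - g⁻¹ = f⁻¹ * (g - f) * g⁻¹ := by
    have h1 : f * f⁻¹ = 1 := PowerSeries.mul_inv_cancel f hf
    have h2 : g * g⁻¹ = 1 := PowerSeries.mul_inv_cancel g hg
    calc f⁻¹ - g⁻¹ = f⁻¹ * (g * g⁻¹) - (f * f⁻¹) * g⁻¹ := by rw [h1, h2]; ring
    _ = f⁻¹ * (g - f) * g⁻¹ := by ring
  rw [key]
  have : (X : PowerSeries ℚ)^n ∣ g - f := by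
    have := h.neg_right
    simpa using this
  exact Dvd.dvd.mul_right (Dvd.dvd.mul_left this _) _

lemma contract (m : ℤ) {w₁ w₂ : PowerSeries ℚ} {n : ℕ}
    (h₁ : constantCoeff w₁ = 0) (h₂ : constantCoeff w₂ = 0)
    (h : (X : PowerSeries ℚ)^n ∣ w₁ - w₂) :
    (X : PowerSeries ℚ)^(n+1) ∣ Phi m w₁ - Phi m w₂ := by
  have hsub : (1 + w₁) - (1 + w₂) = w₁ - w₂ := by ring
  have hdvd : (X : PowerSeries ℚ)^n ∣ (1 + w₁) - (1 + w₂) := by rw [hsub]; exact h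
  have hc₁ : constantCoeff (1 + w₁) ≠ 0 := by simp [h₁]
  have hc₂ : constantCoeff (1 + w₂) ≠ 0 := by simp [h₂]
  have hps : (X : PowerSeries ℚ)^n ∣ psZpow (1 + w₁) m - psZpow (1 + w₂) m := by
    unfold psZpow
    split
    · exact dvd_pow_sub hdvd _
    · exact dvd_pow_sub (dvd_inv_sub hc₁ hc₂ hdvd) _
  have : Phi m w₁ - Phi m w₂ = X * (psZpow (1 + w₁) m - psZpow (1 + w₂) m) := by
    unfold Phi; ring
  rw [this, pow_succ, mul_comm ((X : PowerSeries ℚ)^n) X]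
  exact mul_dvd_mul_left X hps

/-- the iterates -/
noncomputable def aSeq (m : ℤ) (n : ℕ) : PowerSeries ℚ := (Phi m)^[n] 0

lemma aSeq_succ (m : ℤ) (n : ℕ) : aSeq m (n+1) = Phi m (aSeq m n) := by
  simp [aSeq, Function.iterate_succ_apply']

lemma constantCoeff_aSeq (m : ℤ) (n : ℕ) : constantCoeff (aSeq m n) = 0 := by
  cases n with
  | zero => simp [aSeq]
  | succ n => rw [aSeq_succ]; exact constantCoeff_Phi m _

lemma aSeq_step (m : ℤ) (n : ℕ) :
    (X : PowerSeries ℚ)^n ∣ aSeq m (n+1) - aSeq m n := by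
  induction n with
  | zero => simp
  | succ n ih =>
    have h := contract m (constantCoeff_aSeq m (n+1)) (constantCoeff_aSeq m n) ih
    rwa [← aSeq_succ, ← aSeq_succ] at h

lemma aSeq_coeff_stable (m : ℤ) (k n : ℕ) (hn : k < n) :
    coeff k (aSeq m n) = coeff k (aSeq m (k+1)) := by
  induction n with
  | zero => omega
  | succ n ih =>
    rcases Nat.lt_or_ge k n with h | h
    · have h1 : coeff k (aSeq m (n+1)) = coeff k (aSeq m n) := by
        have := (X_pow_dvd_iff.mp (aSeq_step m n)) k h
        rw [map_sub] at this
        linarith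
      rw [h1, ih h]
    · have : n = k := by omega
      subst this; rfl

/-- For every nonzero integer `m`, there is a unique formal power series `w ∈ ℚ[[u]]` with zero
constant coefficient satisfying `w = u · (1 + w)^m`. -/
theorem exists_unique_fixed_point (m : ℤ) (hm : m ≠ 0) :
    ∃! w : PowerSeries ℚ, constantCoeff w = 0 ∧ w = X * psZpow (1 + w) m := by
  set w : PowerSeries ℚ := PowerSeries.mk (fun n => coeff n (aSeq m (n+1))) with hw
  have hwc : ∀ k n : ℕ, k < n → coeff k w = coeff k (aSeq m n) := by
    intro k n hn
    rw [hw, coeff_mk, aSeq_coeff_stable m k n hn]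
  have hw0 : constantCoeff w = 0 := by
    rw [← coeff_zero_eq_constantCoeff_apply, hwc 0 1 (by omega),
      coeff_zero_eq_constantCoeff_apply]
    exact constantCoeff_aSeq m 1
  have hwdvd : ∀ n : ℕ, (X : PowerSeries ℚ)^n ∣ w - aSeq m n := by
    intro n
    rw [X_pow_dvd_iff]
    intro k hk
    rw [map_sub, hwc k n hk, sub_self]
  have hfix : w = Phi m w := by
    ext n
    have h1 : (X : PowerSeries ℚ)^(n+1+1) ∣ Phi m w - Phi m (aSeq m (n+1)) :=
      contract m hw0 (constantCoeff_aSeq m _) (hwdvd (n+1))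
    have h2 : coeff n (Phi m w) = coeff n (aSeq m (n+2)) := by
      have := (X_pow_dvd_iff.mp h1) n (by omega)
      rw [map_sub, ← aSeq_succ] at this
      linarith
    rw [h2, ← hwc n (n+2) (by omega)]
  refine ⟨w, ⟨hw0, hfix⟩, ?_⟩
  rintro v ⟨hv0, hvfix⟩
  have key : ∀ n : ℕ, (X : PowerSeries ℚ)^n ∣ v - w := by
    intro n
    induction n with
    | zero => simp
    | succ n ih =>
      have hv' : Phi m v = v := by unfold Phi; exact hvfix.symm
      have hw' : Phi m w = w := hfix.symm
      have := contract m hv0 hw0 ih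
      rwa [hv', hw'] at this
  ext k
  have := (X_pow_dvd_iff.mp (key (k+1))) k (by omega)
  rw [map_sub] at this
  linarith
end

section
/- Let m be a nonzero integer and let w ∈ ℚ[[u]] be a formal power series with zero constant coefficient satisfying w = u·(1 + w)^m. Let T = Σ_{k≥1} (1/k)·C(m·k, k)·u^k ∈ ℚ[[u]]. Then (1 + w) · T' = m · w', where ' denotes the formal derivative. Equivalently, T = m·log(1 + w) as formal power series. -/
open PowerSeries

/-- The polynomial (in `r`) `r/(mk+r) · C(mk+r, k)`. -/
noncomputable def pp (m r : ℚ) : ℕ → ℚ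
  | 0 => 1
  | (k+1) => r * (∏ i ∈ Finset.range k, (m*(k+1) + r - 1 - i)) / (Nat.factorial (k+1))

lemma gchoose_zero (a : ℚ) : gchoose a 0 = 1 := by simp [gchoose]

lemma gchoose_pascal (a : ℚ) (k : ℕ) :
    gchoose a (k+1) = gchoose (a-1) (k+1) + gchoose (a-1) k := by
  unfold gchoose
  have h1 : (∏ i ∈ Finset.range (k+1), (a - i)) =
      (∏ i ∈ Finset.range k, (a - 1 - i)) * a := by
    rw [Finset.prod_range_succ']
    congr 1
    · exact Finset.prod_congr rfl (fun i _ => by push_cast; ring)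
    · simp
  have h2 : (∏ i ∈ Finset.range (k+1), (a - 1 - i)) =
      (∏ i ∈ Finset.range k, (a - 1 - i)) * (a - 1 - k) := Finset.prod_range_succ _ _
  rw [h1, h2]
  have hf : (Nat.factorial (k+1) : ℚ) = (k+1) * Nat.factorial k := by
    push_cast [Nat.factorial_succ]; ring
  have hk : (Nat.factorial k : ℚ) ≠ 0 := Nat.cast_ne_zero.mpr (Nat.factorial_ne_zero k)
  have hk1 : ((k:ℚ)+1) ≠ 0 := by positivity
  rw [hf]
  field_simp
  ring

lemma pp_succ (m r : ℚ) (k : ℕ) :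
    pp m r (k+1) = r * (∏ i ∈ Finset.range k, (m*(k+1) + r - 1 - i)) / (Nat.factorial (k+1)) :=
  rfl

lemma pp_pascal (m r : ℚ) (k : ℕ) :
    pp m r (k+1) = pp m (r-1) (k+1) + pp m (r+m-1) k := by
  cases k with
  | zero => simp [pp]
  | succ j =>
    rw [pp_succ, pp_succ, pp_succ]
    have h1 : (∏ i ∈ Finset.range (j+1), (m*(j+1+1) + r - 1 - i)) =
        (∏ i ∈ Finset.range j, (m*(j+1+1) + r - 2 - i)) * (m*(j+1+1) + r - 1) := by
      rw [Finset.prod_range_succ']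
      congr 1
      · exact Finset.prod_congr rfl (fun i _ => by push_cast; ring)
      · simp
    have h2 : (∏ i ∈ Finset.range (j+1), (m*(j+1+1) + (r-1) - 1 - i)) =
        (∏ i ∈ Finset.range j, (m*(j+1+1) + r - 2 - i)) * (m*(j+1+1) + r - 2 - j) := by
      rw [Finset.prod_range_succ]
      congr 1
      · exact Finset.prod_congr rfl (fun i _ => by push_cast; ring)
      · ring
    push_cast
    have h3 : (∏ i ∈ Finset.range j, (m*(j+1) + (r+m-1) - 1 - i)) =
        (∏ i ∈ Finset.range j, (m*(j+1+1) + r - 2 - i)) :=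
      Finset.prod_congr rfl (fun i _ => by push_cast; ring)
    rw [h1, h2, h3]
    have hf2 : (Nat.factorial (j+1+1) : ℚ) = (j+2) * Nat.factorial (j+1) := by
      push_cast [Nat.factorial_succ]; ring
    have hk : (Nat.factorial (j+1) : ℚ) ≠ 0 := Nat.cast_ne_zero.mpr (Nat.factorial_ne_zero _)
    have hj2 : ((j:ℚ)+2) ≠ 0 := by positivity
    rw [hf2]
    field_simp
    ring

lemma pp_zero_right (m : ℚ) (k : ℕ) : pp m 0 k = if k = 0 then 1 else 0 := by
  cases k <;> simp [pp]

lemma gchoose_eq_pp (m : ℚ) (k : ℕ) :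
    gchoose (m*(k+1) + 1) (k+1) = (m*(k+1)+1) * pp m 1 (k+1) := by
  rw [pp_succ]
  unfold gchoose
  rw [Finset.prod_range_succ']
  have : (∏ i ∈ Finset.range k, (m*(k+1) + 1 - ((i:ℕ)+1 : ℕ))) =
      (∏ i ∈ Finset.range k, (m*(k+1) + 1 - 1 - i)) :=
    Finset.prod_congr rfl (fun i _ => by push_cast; ring)
  rw [this]
  push_cast
  ring

/-- Uniqueness: a family satisfying the recursion and vanishing at `0` vanishes. -/
lemma family_zero (m : ℤ) (A : ℤ → PowerSeries ℚ)
    (hrec : ∀ r : ℤ, A r = A (r-1) + X * A (r+m-1)) (h0 : A 0 = 0) :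
    ∀ r, A r = 0 := by
  suffices h : ∀ n : ℕ, ∀ r : ℤ, coeff n (A r) = 0 by
    intro r; ext n; rw [h n r]; simp
  intro n
  induction n using Nat.strong_induction_on with
  | _ n ih =>
    have step : ∀ r : ℤ, coeff n (A r) = coeff n (A (r-1)) := by
      intro r
      rw [hrec r, map_add]
      cases n with
      | zero => rw [coeff_zero_X_mul]; ring
      | succ k => rw [coeff_succ_X_mul, ih k (Nat.lt_succ_self k)]; ring
    have const : ∀ r : ℤ, coeff n (A r) = coeff n (A 0) := by
      intro r
      induction r using Int.induction_on with
      | zero => rfl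
      | succ k ihk =>
        rw [← ihk]
        have := step ((k:ℤ)+1)
        simpa using this
      | pred k ihk =>
        rw [← ihk]
        have := step (-(k:ℤ))
        rw [show -(k:ℤ) - 1 = -((k:ℤ)+1) by ring] at this
        rw [show (-(k:ℤ) - 1 : ℤ) = -((k:ℤ)+1) by ring]
        exact this.symm
    intro r; rw [const r, h0]; simp

/-- `1 + w` as a unit of `ℚ⟦X⟧`. -/
noncomputable def Fu (F : PowerSeries ℚ) (hF : constantCoeff F = 1) : (PowerSeries ℚ)ˣ :=
  ⟨F, F⁻¹, PowerSeries.mul_inv_cancel F (by rw [hF]; norm_num),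
    PowerSeries.inv_mul_cancel F (by rw [hF]; norm_num)⟩

lemma psZpow_eq_units (F : PowerSeries ℚ) (hF : constantCoeff F = 1) (r : ℤ) :
    psZpow F r = ((Fu F hF ^ r : (PowerSeries ℚ)ˣ) : PowerSeries ℚ) := by
  rcases le_or_gt 0 r with h | h
  · rw [psZpow, if_pos h, ← Int.toNat_of_nonneg h, zpow_natCast, Units.val_pow_eq_pow_val]
    rfl
  · rw [psZpow, if_neg (not_le.mpr h)]
    have : Fu F hF ^ r = (Fu F hF)⁻¹ ^ (-r).toNat := by
      rw [← zpow_natCast, Int.toNat_of_nonneg (by omega), inv_zpow, ← zpow_neg, neg_neg]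
    rw [this, Units.val_pow_eq_pow_val]
    rfl

/-- `Σ_k C(mk+r, k) u^k`. -/
noncomputable def Qs (m r : ℚ) : PowerSeries ℚ := PowerSeries.mk fun k => gchoose (m*k + r) k

/-- `Σ_k (r/(mk+r)) C(mk+r, k) u^k`. -/
noncomputable def Rs (m r : ℚ) : PowerSeries ℚ := PowerSeries.mk fun k => pp m r k

lemma Qs_rec (m r : ℚ) : Qs m r = Qs m (r-1) + X * Qs m (r+m-1) := by
  ext n
  rw [map_add]
  cases n with
  | zero =>
    simp only [Qs, coeff_zero_X_mul, coeff_mk, Nat.cast_zero]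
    rw [gchoose_zero, gchoose_zero]; ring
  | succ k =>
    simp only [Qs, coeff_succ_X_mul, coeff_mk]
    rw [gchoose_pascal (m*(k+1 : ℕ) + r) k]
    congr 2
    · push_cast; ring
    · push_cast; ring

lemma Rs_rec (m r : ℚ) : Rs m r = Rs m (r-1) + X * Rs m (r+m-1) := by
  ext n
  rw [map_add]
  cases n with
  | zero =>
    simp [Rs, pp]
  | succ k =>
    simp only [Rs, coeff_succ_X_mul, coeff_mk]
    exact pp_pascal m r k

lemma Rs_zero (m : ℚ) : Rs m 0 = 1 := by
  ext n
  rw [Rs, coeff_mk, pp_zero_right, coeff_one]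

/-- If `w ∈ ℚ[[u]]` has zero constant coefficient and satisfies `w = u(1+w)^m`, and
`T = Σ_{k≥1} (1/k)·C(mk, k)·u^k`, then `(1 + w) · T' = m · w'`
(the differential form of `T = m·log(1+w)`). -/
theorem lagrange_log_identity (m : ℤ) (hm : m ≠ 0) (w : PowerSeries ℚ)
    (hw0 : constantCoeff w = 0) (hw : w = X * psZpow (1 + w) m)
    (T : PowerSeries ℚ)
    (hT : T = PowerSeries.mk fun k => if k = 0 then 0 else gchoose ((m : ℚ) * k) k / k) :
    (1 + w) * (PowerSeries.derivative ℚ T) =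
      PowerSeries.C (m : ℚ) * (PowerSeries.derivative ℚ w) := by
  set F : PowerSeries ℚ := 1 + w with hFdef
  have hF : constantCoeff F = 1 := by
    rw [hFdef, map_add, hw0, map_one, add_zero]
  have hU : ∀ r : ℤ, psZpow F r = ((Fu F hF ^ r : (PowerSeries ℚ)ˣ) : PowerSeries ℚ) :=
    psZpow_eq_units F hF
  have hFval : ((Fu F hF : (PowerSeries ℚ)ˣ) : PowerSeries ℚ) = F := rfl
  have hFeq : F = 1 + X * psZpow F m := by
    conv_lhs => rw [hFdef, hw]
  -- the recursion for psZpow F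
  have hmul : ∀ a b : ℤ, psZpow F (a+b) = psZpow F a * psZpow F b := by
    intro a b
    rw [hU, hU, hU, ← Units.val_mul, ← zpow_add]
  have hone : psZpow F 1 = F := by
    rw [psZpow, if_pos (by norm_num)]
    norm_num
  have hFrec : ∀ r : ℤ, psZpow F r = psZpow F (r-1) + X * psZpow F (r+m-1) := by
    intro r
    calc psZpow F r = psZpow F ((r-1) + 1) := by rw [show (r-1)+1 = r by ring]
      _ = psZpow F (r-1) * F := by rw [hmul, hone]
      _ = psZpow F (r-1) * (1 + X * psZpow F m) := by rw [← hFeq]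
      _ = psZpow F (r-1) + X * (psZpow F (r-1) * psZpow F m) := by ring
      _ = psZpow F (r-1) + X * psZpow F (r+m-1) := by
          rw [show r+m-1 = (r-1)+m by ring, hmul]
  -- Claim A : psZpow F r = Rs m r
  have claimA : ∀ r : ℤ, psZpow F r = Rs (m:ℚ) (r:ℚ) := by
    have := family_zero m (fun r => psZpow F r - Rs (m:ℚ) (r:ℚ)) ?_ ?_
    · intro r
      have h := this r
      simpa [sub_eq_zero] using h
    · intro r
      have h1 := hFrec r
      have h2 := Rs_rec (m:ℚ) (r:ℚ)
      rw [h1, h2]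
      push_cast
      ring
    · simp only [Int.cast_zero]
      rw [Rs_zero, psZpow, if_pos le_rfl]
      norm_num
  -- Claim B : Qs m r = psZpow F r * Qs m 0
  have claimB : ∀ r : ℤ, Qs (m:ℚ) (r:ℚ) = psZpow F r * Qs (m:ℚ) 0 := by
    have := family_zero m (fun r => Qs (m:ℚ) (r:ℚ) - psZpow F r * Qs (m:ℚ) 0) ?_ ?_
    · intro r
      have h := this r
      simpa [sub_eq_zero] using h
    · intro r
      have h1 := hFrec r
      have h2 := Qs_rec (m:ℚ) (r:ℚ)
      rw [h2]
      nth_rewrite 1 [h1]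
      push_cast
      ring
    · simp only [Int.cast_zero]
      rw [psZpow, if_pos le_rfl]
      norm_num
  -- G = Qs m 0 = 1 + X * T'
  have hG : Qs (m:ℚ) 0 = 1 + X * (PowerSeries.derivative ℚ T) := by
    ext n
    rw [map_add]
    cases n with
    | zero =>
      simp only [Qs, coeff_mk, coeff_zero_X_mul, Nat.cast_zero, mul_zero, zero_add]
      rw [gchoose_zero, add_zero, coeff_one]
      norm_num
    | succ k =>
      rw [Qs, coeff_mk, coeff_one, coeff_succ_X_mul, coeff_derivative, hT, coeff_mk]
      have hk : ((k:ℚ)+1) ≠ 0 := by positivity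
      simp only [Nat.succ_ne_zero, if_false]
      push_cast
      field_simp
      rw [add_zero, zero_add]
  have hA1 : F = Rs (m:ℚ) 1 := by
    have := claimA 1
    rw [psZpow, if_pos (by norm_num)] at this
    norm_num at this ⊢
    exact this
  have hB1 : Qs (m:ℚ) 1 = F * Qs (m:ℚ) 0 := by
    have := claimB 1
    rw [psZpow, if_pos (by norm_num)] at this
    norm_num at this ⊢
    exact this
  -- the key identity, multiplied by X
  have key : X * (F * (PowerSeries.derivative ℚ T)) =
      X * (PowerSeries.C (m:ℚ) * (PowerSeries.derivative ℚ w)) := by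
    have lhs : X * (F * (PowerSeries.derivative ℚ T)) = Qs (m:ℚ) 1 - Rs (m:ℚ) 1 := by
      rw [hB1, ← hA1]
      have : X * (F * (PowerSeries.derivative ℚ T)) = F * (X * (PowerSeries.derivative ℚ T)) := by
        ring
      rw [this]
      have hXT : X * (PowerSeries.derivative ℚ T) = Qs (m:ℚ) 0 - 1 := by
        rw [hG]; ring
      rw [hXT]
      ring
    rw [lhs]
    ext n
    rw [map_sub]
    cases n with
    | zero =>
      simp only [Qs, Rs, coeff_mk, Nat.cast_zero, mul_zero, zero_add, coeff_zero_X_mul, mul_zero]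
      rw [gchoose_zero]
      simp [pp]
    | succ k =>
      have hcw : coeff (k+1) w = pp (m:ℚ) 1 (k+1) := by
        have : coeff (k+1) F = coeff (k+1) w := by
          rw [hFdef, map_add, coeff_one]
          simp
        rw [← this, hA1, Rs, coeff_mk]
      rw [coeff_succ_X_mul, coeff_C_mul, coeff_derivative, hcw, Qs, Rs, coeff_mk, coeff_mk]
      push_cast
      rw [gchoose_eq_pp (m:ℚ) k]
      ring
  exact mul_left_cancel₀ PowerSeries.X_ne_zero key
end

section
/- Let m be a nonzero integer and let v ∈ ℚ[[u]] be a formal power series with zero constant coefficient satisfying v = u·(1 − v)^m. Let S = Σ_{k≥1} ((−1)^{k+1}/k)·C(m·k, k)·u^k ∈ ℚ[[u]]. Then (1 − v) · S' = m · v', where ' denotes the formal derivative. Equivalently, S = −m·log(1 − v) as formal power series. -/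
open PowerSeries

noncomputable def Pprod (B : ℚ) (n : ℕ) : ℚ := ∏ i ∈ Finset.range n, (B - i)

lemma Pprod_succ (B : ℚ) (n : ℕ) : Pprod B (n+1) = Pprod B n * (B - n) :=
  Finset.prod_range_succ _ n

lemma Pprod_succ' (B : ℚ) (n : ℕ) : Pprod B (n+1) = Pprod (B-1) n * B := by
  unfold Pprod
  rw [Finset.prod_range_succ']
  congr 1
  · exact Finset.prod_congr rfl fun i _ => by push_cast; ring
  · push_cast; ring

noncomputable def Q (c : ℚ) : ℕ → ℚ → ℚ
  | 0, _ => 1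
  | n+1, r => (-1:ℚ)^(n+1) * r * Pprod (c*((n:ℚ)+1) + r - 1) n / ((n+1).factorial : ℚ)

lemma Q_key (c : ℚ) (n : ℕ) (r : ℚ) : Q c (n+1) (r+1) = Q c (n+1) r - Q c n (c+r) := by
  cases n with
  | zero => simp [Q, Pprod]; ring
  | succ k =>
    simp only [Q]
    push_cast
    rw [show c*((k:ℚ)+1+1)+(r+1)-1 = (c*((k:ℚ)+1+1)+r-1)+1 by ring,
        show c*((k:ℚ)+1)+(c+r)-1 = c*((k:ℚ)+1+1)+r-1 by ring,
        Pprod_succ', Pprod_succ,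
        show (c*((k:ℚ)+1+1)+r-1)+1-1 = c*((k:ℚ)+1+1)+r-1 by ring,
        Nat.factorial_succ (k+1)]
    have h1 : ((k+1).factorial : ℚ) ≠ 0 := by exact_mod_cast (k+1).factorial_ne_zero
    push_cast
    field_simp
    ring

lemma gchoose_eq (a : ℚ) (b : ℕ) : gchoose a b = Pprod a b / (b.factorial : ℚ) := rfl

lemma key2 (c : ℚ) (k : ℕ) :
    (-1:ℚ)^(k+1) * gchoose (c*((k:ℚ)+2)) (k+2) = (c + (c-1)*((k:ℚ)+1)) * Q c (k+1) c := by
  rw [gchoose_eq]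
  simp only [Q]
  rw [show c*((k:ℚ)+2) = (c*((k:ℚ)+2)-1)+1 by ring, Pprod_succ', Pprod_succ,
      show (c*((k:ℚ)+2)-1)+1-1 = c*((k:ℚ)+2)-1 by ring,
      show c*((k:ℚ)+1)+c-1 = c*((k:ℚ)+2)-1 by ring,
      Nat.factorial_succ (k+1)]
  have h1 : ((k+1).factorial : ℚ) ≠ 0 := by exact_mod_cast (k+1).factorial_ne_zero
  push_cast
  field_simp
  ring

/-- If `v ∈ ℚ[[u]]` has zero constant coefficient and satisfies `v = u(1−v)^m`, and
`S = Σ_{k≥1} ((−1)^{k+1}/k)·C(mk, k)·u^k`, then `(1 − v) · S' = m · v'`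
(the differential form of `S = −m·log(1−v)`). -/
theorem lagrange_log_identity_alt (m : ℤ) (hm : m ≠ 0) (v : PowerSeries ℚ)
    (hv0 : constantCoeff v = 0) (hv : v = X * psZpow (1 - v) m)
    (S : PowerSeries ℚ)
    (hS : S = PowerSeries.mk fun k =>
      if k = 0 then 0 else (-1 : ℚ) ^ (k + 1) / k * gchoose ((m : ℚ) * k) k) :
    (1 - v) * (PowerSeries.derivative ℚ S) =
      PowerSeries.C (m : ℚ) * (PowerSeries.derivative ℚ v) := by
  have hw0 : constantCoeff (1 - v) = 1 := by simp [hv0]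
  have hw0' : constantCoeff (1 - v) ≠ 0 := by rw [hw0]; exact one_ne_zero
  set U : (PowerSeries ℚ)ˣ :=
    ⟨1 - v, (1 - v)⁻¹, PowerSeries.mul_inv_cancel _ hw0', PowerSeries.inv_mul_cancel _ hw0'⟩
    with hU
  set W : ℤ → PowerSeries ℚ := fun r => ((U ^ r : (PowerSeries ℚ)ˣ) : PowerSeries ℚ) with hWdef
  have hWval : ∀ r : ℤ, W r = ((U ^ r : (PowerSeries ℚ)ˣ) : PowerSeries ℚ) := fun _ => rfl
  have hUval : (U : PowerSeries ℚ) = 1 - v := rfl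
  have hUinv : ((U⁻¹ : (PowerSeries ℚ)ˣ) : PowerSeries ℚ) = (1 - v)⁻¹ := rfl
  have hpsZ : ∀ r : ℤ, psZpow (1 - v) r = W r := by
    intro r
    by_cases h : 0 ≤ r
    · rw [psZpow, if_pos h, hWval]
      conv_rhs => rw [← Int.toNat_of_nonneg h]
      rw [zpow_natCast, Units.val_pow_eq_pow_val, hUval]
    · rw [psZpow, if_neg h]
      have h2 : r = -(((-r).toNat : ℕ) : ℤ) := by omega
      calc (1 - v)⁻¹ ^ (-r).toNat
          = ((U⁻¹ : (PowerSeries ℚ)ˣ) : PowerSeries ℚ) ^ (-r).toNat := by rw [hUinv]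
        _ = (((U⁻¹ ^ (-r).toNat : (PowerSeries ℚ)ˣ)) : PowerSeries ℚ) :=
            (Units.val_pow_eq_pow_val _ _).symm
        _ = ((U ^ r : (PowerSeries ℚ)ˣ) : PowerSeries ℚ) := by
            congr 1
            rw [inv_pow, ← zpow_natCast, ← zpow_neg, ← h2]
        _ = W r := rfl
  have hWadd : ∀ a b : ℤ, W (a + b) = W a * W b := by
    intro a b; rw [hWval, hWval, hWval, zpow_add, Units.val_mul]
  have hW1 : W 1 = 1 - v := by rw [hWval, zpow_one, hUval]
  have hv' : v = X * W m := by rw [hv, hpsZ]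
  have hWrec : ∀ r : ℤ, W (r + 1) = W r - X * W (m + r) := by
    intro r
    have h : W (r + 1) = (1 - v) * W r := by rw [add_comm, hWadd, hW1]
    rw [h, sub_mul, one_mul]
    conv_lhs => rw [hv']
    rw [mul_assoc, ← hWadd]
  have hconst : ∀ r : ℤ, constantCoeff (W r) = 1 := by
    intro r
    have h1 : (Units.map (constantCoeff : PowerSeries ℚ →+* ℚ).toMonoidHom) U = 1 :=
      Units.ext (by simpa [hUval] using hw0)
    calc constantCoeff (W r)
        = ((Units.map (constantCoeff : PowerSeries ℚ →+* ℚ).toMonoidHom (U ^ r) : ℚˣ) : ℚ) := by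
          rw [hWval, Units.coe_map]; rfl
      _ = (((Units.map (constantCoeff : PowerSeries ℚ →+* ℚ).toMonoidHom U) ^ r : ℚˣ) : ℚ) := by
          rw [map_zpow]
      _ = 1 := by rw [h1, one_zpow, Units.val_one]
  -- Step 1: coefficients of W r
  have hcoeff : ∀ (n : ℕ) (r : ℤ), (coeff n) (W r) = Q (m : ℚ) n (r : ℚ) := by
    intro n
    induction n with
    | zero =>
      intro r
      rw [coeff_zero_eq_constantCoeff, hconst]
      rfl
    | succ n ih =>
      intro r
      induction r using Int.induction_on with
      | zero =>
        have h0 : W 0 = 1 := by rw [hWval, zpow_zero, Units.val_one]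
        rw [h0]
        simp [Q]
      | succ k ihk =>
        rw [hWrec (k : ℤ), map_sub, coeff_succ_X_mul, ihk, ih (m + k)]
        push_cast
        exact (Q_key (m : ℚ) n (k : ℚ)).symm
      | pred k ihk =>
        have h := hWrec (-(k + 1) : ℤ)
        rw [show (-(k + 1 : ℤ) + 1) = -(k : ℤ) by ring] at h
        have h2 : W (-(k + 1) : ℤ) = W (-(k : ℤ)) + X * W (m + -(k + 1 : ℤ)) := by
          rw [h]; ring
        rw [show ((-(k : ℤ) - 1)) = (-(k + 1 : ℤ)) by ring, h2, map_add, coeff_succ_X_mul,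
          ihk, ih]
        have h3 : Q (m : ℚ) (n + 1) (-(k : ℚ)) =
            Q (m : ℚ) (n + 1) (-(k : ℚ) - 1) - Q (m : ℚ) n ((m : ℚ) + (-(k : ℚ) - 1)) := by
          have := Q_key (m : ℚ) n (-(k : ℚ) - 1)
          rwa [show (-(k : ℚ) - 1 + 1) = -(k : ℚ) by ring] at this
        push_cast
        push_cast at h3
        rw [show (-(k:ℚ) - 1) = -((k:ℚ)+1) by ring] at h3
        linarith [h3]
  -- Step 2: formula for derivative of S
  have hdS : derivative ℚ S =
      C (m : ℚ) * W m + C ((m : ℚ) - 1) * (X * derivative ℚ (W m)) := by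
    ext k
    rw [coeff_derivative, hS, coeff_mk, map_add, coeff_C_mul, coeff_C_mul]
    cases k with
    | zero =>
      rw [if_neg (Nat.succ_ne_zero 0), coeff_zero_eq_constantCoeff, hconst]
      simp only [map_mul, constantCoeff_X, zero_mul, mul_zero, add_zero]
      simp [gchoose_eq, Pprod, Finset.prod_range_one, Nat.factorial]
    | succ k =>
      rw [if_neg (Nat.succ_ne_zero (k + 1)), coeff_succ_X_mul, coeff_derivative, hcoeff]
      have h4 := key2 (m : ℚ) k
      have hk : ((k : ℚ) + 1 + 1) ≠ 0 := by positivity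
      push_cast
      rw [show ((m:ℚ) * ((k:ℚ)+1+1)) = (m:ℚ)*((k:ℚ)+2) by ring,
          show (k+1+1) = (k+2) from rfl]
      field_simp
      linear_combination h4
  -- derivative of powers
  have hdpow : ∀ (f : PowerSeries ℚ) (k : ℕ),
      derivative ℚ (f ^ k) * f = C (k : ℚ) * f ^ k * derivative ℚ f := by
    intro f k
    induction k with
    | zero => simp
    | succ k ih =>
      rw [pow_succ, Derivation.leibniz, smul_eq_mul, smul_eq_mul]
      have hc : C ((k : ℚ) + 1) = C (k : ℚ) + 1 := by rw [map_add, map_one]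
      push_cast
      rw [hc]
      linear_combination f * ih
  have hdW : derivative ℚ (W m) * (1 - v) = C (m : ℚ) * W m * derivative ℚ (1 - v) := by
    by_cases h : 0 ≤ m
    · have hWm : W m = (1 - v) ^ m.toNat := by
        rw [← hpsZ m, psZpow, if_pos h]
      rw [hWm, hdpow]
      have hc : ((m.toNat : ℚ)) = (m : ℚ) := by exact_mod_cast Int.toNat_of_nonneg h
      rw [hc]
    · have hWm : W m = (1 - v)⁻¹ ^ (-m).toNat := by
        rw [← hpsZ m, psZpow, if_neg h]
      set g := (1 - v)⁻¹ with hg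
      set f := (1 - v) with hf
      set kk := (-m).toNat with hkk
      have h3 : g * f = 1 := PowerSeries.inv_mul_cancel _ hw0'
      have h2 : g * derivative ℚ f + f * derivative ℚ g = 0 := by
        have := congrArg (derivative ℚ) h3
        rwa [Derivation.leibniz, smul_eq_mul, smul_eq_mul, Derivation.map_one_eq_zero] at this
      have h1 := hdpow g kk
      have hmc : (m : ℚ) = -(kk : ℚ) := by
        have h5 : ((-m).toNat : ℤ) = -m := Int.toNat_of_nonneg (by omega)
        have h6 : (((-m).toNat : ℕ) : ℚ) = -(m : ℚ) := by exact_mod_cast h5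
        rw [hkk]
        linarith [h6]
      rw [hWm, hmc, map_neg]
      linear_combination (f^2) * h1 + (C (kk:ℚ) * g^kk * f) * h2 +
        (-(C (kk:ℚ) * g^kk * derivative ℚ f + derivative ℚ (g^kk) * f)) * h3
  -- final assembly
  have hdv : derivative ℚ v = W m + X * derivative ℚ (W m) := by
    conv_lhs => rw [hv']
    rw [Derivation.leibniz, smul_eq_mul, smul_eq_mul, derivative_X, mul_one]
    ring
  have hdw : derivative ℚ (1 - v) = -derivative ℚ v := by
    have h := congrArg (derivative ℚ) (sub_add_cancel (1 : PowerSeries ℚ) v)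
    rw [map_add, Derivation.map_one_eq_zero] at h
    exact eq_neg_of_add_eq_zero_left h
  have h1 : derivative ℚ (W m) * (1 - v) = -(C (m : ℚ) * W m * derivative ℚ v) := by
    rw [hdW, hdw]; ring
  rw [hdS, show C ((m : ℚ) - 1) = C (m : ℚ) - 1 by rw [map_sub, map_one]]
  linear_combination (-X) * h1 + (-(C (m : ℚ)) * (1 - v)) * hdv +
    (-(C (m : ℚ)) * (derivative ℚ v)) * hv'
end

section
/- Let m be a nonzero integer and let w ∈ ℚ[[u]] be a formal power series with zero constant coefficient satisfying w = u·(1 + w)^m. Then the formal derivative w' satisfies (1 + (1 − m)·w) · w' = (1 + w)^{m+1} in ℚ[[u]]. -/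
open PowerSeries

/-- If `w` has zero constant coefficient and satisfies `w = u(1+w)^m`, then its formal
derivative satisfies `(1 + (1−m)w) · w' = (1+w)^{m+1}`. -/
theorem derivative_identity (m : ℤ) (hm : m ≠ 0) (w : PowerSeries ℚ)
    (hw0 : constantCoeff w = 0) (hw : w = X * psZpow (1 + w) m) :
    (1 + PowerSeries.C (1 - (m : ℚ)) * w) * (PowerSeries.derivative ℚ w) =
      psZpow (1 + w) (m + 1) := by
  classical
  set s : PowerSeries ℚ := 1 + w with hs
  set D : PowerSeries ℚ := PowerSeries.derivative ℚ w with hD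
  have hs0 : constantCoeff s = 1 := by rw [hs]; simp [hw0]
  have hsne : constantCoeff s ≠ 0 := by rw [hs0]; norm_num
  have hds : PowerSeries.derivative ℚ s = D := by rw [hs, hD]; simp
  have hC : PowerSeries.C (1 - (m : ℚ)) = 1 - (m : PowerSeries ℚ) := by
    push_cast; simp
  clear_value s D
  rcases lt_or_gt_of_ne hm with hneg | hpos
  · -- m < 0
    obtain ⟨k, hk⟩ : ∃ k : ℕ, m = -(k + 1) := ⟨(-m).toNat - 1, by omega⟩
    subst hk
    have hwX : w = X * (s⁻¹) ^ (k + 1) := by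
      rw [hw]
      unfold psZpow
      rw [if_neg (by omega)]
      norm_num
    have hXeq : w * s ^ (k + 1) = X := by
      rw [hwX, mul_assoc, ← mul_pow, PowerSeries.inv_mul_cancel s hsne, one_pow, mul_one]
    have hder : w * (((k : PowerSeries ℚ) + 1) * s ^ k * D) + s ^ (k + 1) * D = 1 := by
      have h2 := congrArg (PowerSeries.derivative ℚ) hXeq
      rw [Derivation.leibniz, Derivation.leibniz_pow, hds, derivative_X, ← hD] at h2
      simp only [smul_eq_mul, nsmul_eq_mul, Nat.add_sub_cancel, Nat.cast_add,
        Nat.cast_one] at h2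
      linear_combination h2
    have hsk : s ^ k ≠ 0 := pow_ne_zero _ (fun h => hsne (by rw [h]; simp))
    apply mul_right_cancel₀ hsk
    have hrhs : psZpow s (-(k + 1 : ℤ) + 1) * s ^ k = 1 := by
      rcases Nat.eq_zero_or_pos k with hk0 | hk0
      · subst hk0
        unfold psZpow
        rw [if_pos (by omega)]
        norm_num
      · unfold psZpow
        rw [if_neg (by omega)]
        have h3 : ((-(-(k + 1 : ℤ) + 1)).toNat) = k := by omega
        rw [h3, ← mul_pow, PowerSeries.inv_mul_cancel s hsne, one_pow]
    rw [hrhs, hC]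
    push_cast
    linear_combination hder - D * s ^ k * hs
  · -- m > 0
    obtain ⟨k, hk⟩ : ∃ k : ℕ, m = (k + 1 : ℕ) := ⟨m.toNat - 1, by omega⟩
    subst hk
    have hwX : w = X * s ^ (k + 1) := by
      rw [hw]
      unfold psZpow
      rw [if_pos (by omega)]
      norm_num
    have hrhs : psZpow s ((k + 1 : ℕ) + 1) = s ^ (k + 2) := by
      unfold psZpow
      rw [if_pos (by omega)]
      congr 1
    have hder : D = s ^ (k + 1) + X * (((k : PowerSeries ℚ) + 1) * s ^ k * D) := by
      have h2 := congrArg (PowerSeries.derivative ℚ) hwX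
      rw [Derivation.leibniz, Derivation.leibniz_pow, hds, derivative_X, ← hD] at h2
      simp only [smul_eq_mul, nsmul_eq_mul, Nat.add_sub_cancel, Nat.cast_add,
        Nat.cast_one, mul_one] at h2
      linear_combination h2
    rw [hrhs, hC]
    push_cast
    linear_combination s * hder - ((k : PowerSeries ℚ) + 1) * D * hwX - D * hs
end

section
/- Let m be a nonzero integer and define G on formal power series with zero constant coefficient by G(ξ) = (x/(1−x)^m)·(1 − ξ)^m, i.e., G(ξ) is x·(1−x)^{−m}·(1 − ξ)^m ∈ ℚ[[x]]. Then G is a strict contraction in the x-adic sense: for every N ≥ 1 and all ξ₁, ξ₂ ∈ ℚ[[x]] with zero constant coefficient, if x^N divides ξ₁ − ξ₂ then x^{N+1} divides G(ξ₁) − G(ξ₂). -/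
open PowerSeries

lemma psInvSubInv (f g : PowerSeries ℚ)
    (hf : constantCoeff f ≠ 0) (hg : constantCoeff g ≠ 0) :
    f⁻¹ - g⁻¹ = f⁻¹ * (g - f) * g⁻¹ := by
  have h1 : f⁻¹ * f = 1 := PowerSeries.inv_mul_cancel f hf
  have h2 : g * g⁻¹ = 1 := PowerSeries.mul_inv_cancel g hg
  calc f⁻¹ - g⁻¹ = f⁻¹ * (g * g⁻¹) - (f⁻¹ * f) * g⁻¹ := by rw [h1, h2]; ring
    _ = f⁻¹ * (g - f) * g⁻¹ := by ring

/-- The map `G(ξ) = x·(1−x)^{−m}·(1−ξ)^m` is a strict contraction in the `x`-adic sense: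
if `x^N ∣ ξ₁ − ξ₂` (with `N ≥ 1` and `ξ₁, ξ₂` of zero constant coefficient),
then `x^{N+1} ∣ G(ξ₁) − G(ξ₂)`. -/
theorem contraction (m : ℤ) (hm : m ≠ 0) (N : ℕ) (hN : 1 ≤ N)
    (ξ₁ ξ₂ : PowerSeries ℚ)
    (h₁ : constantCoeff ξ₁ = 0) (h₂ : constantCoeff ξ₂ = 0)
    (hdvd : (X : PowerSeries ℚ) ^ N ∣ ξ₁ - ξ₂) :
    (X : PowerSeries ℚ) ^ (N + 1) ∣
      X * psZpow (1 - X) (-m) * psZpow (1 - ξ₁) m -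
        X * psZpow (1 - X) (-m) * psZpow (1 - ξ₂) m := by
  have key : (X : PowerSeries ℚ) ^ N ∣ psZpow (1 - ξ₁) m - psZpow (1 - ξ₂) m := by
    have hsub : (X : PowerSeries ℚ) ^ N ∣ (1 - ξ₂) - (1 - ξ₁) := by
      have : (1 - ξ₂) - (1 - ξ₁) = ξ₁ - ξ₂ := by ring
      rwa [this]
    have hc₁ : constantCoeff (1 - ξ₁) ≠ 0 := by simp [h₁]
    have hc₂ : constantCoeff (1 - ξ₂) ≠ 0 := by simp [h₂]
    unfold psZpow
    split_ifs with h
    · have hs : (X : PowerSeries ℚ) ^ N ∣ (1 - ξ₁) - (1 - ξ₂) := by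
        have e : (1 - ξ₁) - (1 - ξ₂) = ξ₂ - ξ₁ := by ring
        rw [e]; exact (dvd_sub_comm).mpr hdvd
      exact dvd_trans hs (sub_dvd_pow_sub_pow _ _ _)
    · have hinv : (X : PowerSeries ℚ) ^ N ∣ (1 - ξ₁)⁻¹ - (1 - ξ₂)⁻¹ := by
        rw [psInvSubInv _ _ hc₁ hc₂]
        exact Dvd.dvd.mul_right (Dvd.dvd.mul_left hsub _) _
      exact dvd_trans hinv (sub_dvd_pow_sub_pow _ _ _)
  obtain ⟨t, ht⟩ := key
  refine ⟨psZpow (1 - X) (-m) * t, ?_⟩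
  have : X * psZpow (1 - X) (-m) * psZpow (1 - ξ₁) m -
      X * psZpow (1 - X) (-m) * psZpow (1 - ξ₂) m =
      X * psZpow (1 - X) (-m) * (psZpow (1 - ξ₁) m - psZpow (1 - ξ₂) m) := by ring
  rw [this, ht, pow_succ]
  ring
end

section
/- For every real number u with 0 < u < 1/4, the series Σ_{k≥1} C(2k, k)·u^k/k converges and equals 2·log(2/(1 + √(1 − 4u))). -/
open Real Set

private lemma cb_le_four_pow (k : ℕ) : (Nat.centralBinom k : ℝ) ≤ 4 ^ k := by
  have h : Nat.centralBinom k ≤ 4 ^ k := by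
    rw [Nat.centralBinom]
    calc (2 * k).choose k ≤ ∑ m ∈ Finset.range (2 * k + 1), (2 * k).choose m :=
          Finset.single_le_sum (fun i _ => Nat.zero_le _) (Finset.mem_range.2 (by omega))
      _ = 2 ^ (2 * k) := Nat.sum_range_choose _
      _ = 4 ^ k := by rw [pow_mul]; norm_num
  exact_mod_cast h

private lemma cb_rec (k : ℕ) :
    ((k : ℝ) + 1) * (Nat.centralBinom (k + 1) : ℝ)
      = (4 * k + 2) * (Nat.centralBinom k : ℝ) := by
  have h := Nat.succ_mul_centralBinom_succ k
  have h' := congrArg (Nat.cast : ℕ → ℝ) h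
  push_cast at h'
  linarith

/-- The ODE satisfied by the central binomial generating function. -/
private lemma gf_ode (x : ℝ)
    (h1 : Summable fun k : ℕ => (Nat.centralBinom k : ℝ) * x ^ k)
    (h2 : Summable fun k : ℕ => (Nat.centralBinom k : ℝ) * ((k : ℝ) * x ^ (k - 1))) :
    (1 - 4 * x) * ∑' k : ℕ, (Nat.centralBinom k : ℝ) * ((k : ℝ) * x ^ (k - 1))
      = 2 * ∑' k : ℕ, (Nat.centralBinom k : ℝ) * x ^ k := by
  have per : ∀ k : ℕ, (Nat.centralBinom (k + 1) : ℝ) * (((k : ℝ) + 1) * x ^ k)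
      = 4 * x * ((Nat.centralBinom k : ℝ) * ((k : ℝ) * x ^ (k - 1)))
        + 2 * ((Nat.centralBinom k : ℝ) * x ^ k) := by
    intro k
    cases k with
    | zero => simp [Nat.centralBinom]
    | succ n =>
      have h := cb_rec (n + 1)
      push_cast at h ⊢
      rw [pow_succ]
      linear_combination (x ^ n * x) * h
  have hA : ∑' k : ℕ, (Nat.centralBinom k : ℝ) * ((k : ℝ) * x ^ (k - 1))
      = ∑' k : ℕ, (Nat.centralBinom (k + 1) : ℝ) * (((k : ℝ) + 1) * x ^ k) := by
    rw [Summable.tsum_eq_zero_add h2]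
    push_cast
    simp
  have hstep : ∑' k : ℕ, (Nat.centralBinom (k + 1) : ℝ) * (((k : ℝ) + 1) * x ^ k)
      = 4 * x * (∑' k : ℕ, (Nat.centralBinom k : ℝ) * ((k : ℝ) * x ^ (k - 1)))
        + 2 * ∑' k : ℕ, (Nat.centralBinom k : ℝ) * x ^ k := by
    rw [← tsum_mul_left, ← tsum_mul_left,
      ← Summable.tsum_add (h2.mul_left (4 * x)) (h1.mul_left 2)]
    exact tsum_congr per
  have h := hA.trans hstep
  linear_combination h

/-- For `0 < u < 1/4`, the series `Σ_{k≥1} C(2k,k) u^k / k` converges to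
`2·log(2/(1 + √(1 − 4u)))`. -/
theorem central_binomial_log_sum (u : ℝ) (hu0 : 0 < u) (hu : u < 1 / 4) :
    HasSum (fun k : ℕ => if k = 0 then (0 : ℝ)
        else (Nat.choose (2 * k) k : ℝ) * u ^ k / k)
      (2 * Real.log (2 / (1 + Real.sqrt (1 - 4 * u)))) := by
  set r : ℝ := (u + 1 / 4) / 2 with hrdef
  have hur : u < r := by rw [hrdef]; linarith
  have hr0 : 0 < r := lt_trans hu0 hur
  have hr4 : r < 1 / 4 := by rw [hrdef]; linarith
  have h4r : 4 * r < 1 := by linarith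
  have h4r0 : 0 ≤ 4 * r := by linarith
  set C : ℕ → ℝ := fun k => (Nat.centralBinom k : ℝ) with hCdef
  have hC0 : ∀ k, 0 < C k := fun k => by
    show (0:ℝ) < (Nat.centralBinom k : ℝ)
    exact_mod_cast Nat.centralBinom_pos k
  -- geometric majorants
  have hgeo : Summable fun k : ℕ => (4 * r) ^ k := summable_geometric_of_lt_one h4r0 h4r
  have hgeo1 : Summable fun k : ℕ => (k : ℝ) * (4 * r) ^ k := by
    have := summable_pow_mul_geometric_of_norm_lt_one 1 (r := 4 * r)
      (by rw [Real.norm_eq_abs, abs_of_nonneg h4r0]; exact h4r)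
    simpa using this
  -- summability of the various series for |x| < r
  have hS1 : ∀ x : ℝ, |x| < r → Summable fun k : ℕ => C k * x ^ k := by
    intro x hx
    refine Summable.of_norm_bounded hgeo fun k => ?_
    have h1 : |x| ^ k ≤ r ^ k := pow_le_pow_left₀ (abs_nonneg x) hx.le k
    have h2 : C k ≤ 4 ^ k := cb_le_four_pow k
    rw [norm_mul, norm_pow, Real.norm_eq_abs, Real.norm_eq_abs,
      abs_of_nonneg (hC0 k).le, mul_pow]
    exact mul_le_mul h2 h1 (pow_nonneg (abs_nonneg x) k) (by positivity)
  have hS2 : ∀ x : ℝ, |x| < r → Summable fun k : ℕ => C k * ((k : ℝ) * x ^ (k - 1)) := by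
    intro x hx
    refine Summable.of_norm_bounded (hgeo1.mul_left (1 / r)) fun k => ?_
    cases k with
    | zero => simp
    | succ n =>
      rw [Nat.add_sub_cancel, norm_mul, norm_mul, norm_pow, Real.norm_eq_abs,
        Real.norm_eq_abs, Real.norm_eq_abs, abs_of_nonneg (hC0 _).le,
        abs_of_nonneg (by positivity : (0:ℝ) ≤ ((n + 1 : ℕ) : ℝ))]
      have h1 : |x| ^ n ≤ r ^ n := pow_le_pow_left₀ (abs_nonneg x) hx.le n
      have h2 : C (n + 1) ≤ 4 ^ (n + 1) := cb_le_four_pow (n + 1)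
      have key : 1 / r * (((n + 1 : ℕ) : ℝ) * (4 * r) ^ (n + 1))
          = ((n + 1 : ℕ) : ℝ) * (4 ^ (n + 1) * r ^ n) := by
        rw [mul_pow]
        field_simp
        ring
      rw [key]
      have : C (n + 1) * |x| ^ n ≤ 4 ^ (n + 1) * r ^ n :=
        mul_le_mul h2 h1 (pow_nonneg (abs_nonneg x) n) (by positivity)
      calc C (n + 1) * (((n + 1 : ℕ) : ℝ) * |x| ^ n)
          = ((n + 1 : ℕ) : ℝ) * (C (n + 1) * |x| ^ n) := by ring
        _ ≤ ((n + 1 : ℕ) : ℝ) * (4 ^ (n + 1) * r ^ n) := by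
            apply mul_le_mul_of_nonneg_left this (by positivity)
  have hS3 : ∀ x : ℝ, |x| < r →
      Summable fun k : ℕ => (if k = 0 then (0:ℝ) else C k * x ^ (k - 1)) := by
    intro x hx
    refine Summable.of_norm_bounded (hgeo.mul_left (1 / r)) fun k => ?_
    cases k with
    | zero => simp; positivity
    | succ n =>
      simp only [Nat.succ_ne_zero, if_false, Nat.add_sub_cancel]
      rw [norm_mul, norm_pow, Real.norm_eq_abs, Real.norm_eq_abs,
        abs_of_nonneg (hC0 _).le]
      have h1 : |x| ^ n ≤ r ^ n := pow_le_pow_left₀ (abs_nonneg x) hx.le n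
      have h2 : C (n + 1) ≤ 4 ^ (n + 1) := cb_le_four_pow (n + 1)
      have key : 1 / r * (4 * r) ^ (n + 1) = 4 ^ (n + 1) * r ^ n := by
        rw [mul_pow]; field_simp; ring
      rw [key]
      exact mul_le_mul h2 h1 (pow_nonneg (abs_nonneg x) n) (by positivity)
  -- the open interval
  have htopen : IsOpen (Ioo (-r) r) := isOpen_Ioo
  have htconn : IsPreconnected (Ioo (-r) r) := (convex_Ioo (-r) r).isPreconnected
  have h0t : (0:ℝ) ∈ Ioo (-r) r := ⟨by linarith, hr0⟩
  have hmem : ∀ x ∈ Icc (0:ℝ) u, x ∈ Ioo (-r) r := fun x hx =>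
    ⟨by linarith [hx.1], by linarith [hx.2]⟩
  have habs : ∀ x ∈ Ioo (-r) r, |x| < r := fun x hx => abs_lt.2 ⟨hx.1, hx.2⟩
  -- derivative of the generating function series P
  have hPderiv : ∀ x ∈ Ioo (-r) r,
      HasDerivAt (fun y => ∑' k : ℕ, C k * y ^ k)
        (∑' k : ℕ, C k * ((k : ℝ) * x ^ (k - 1))) x := by
    intro x hx
    refine hasDerivAt_tsum_of_isPreconnected
      (g := fun (k : ℕ) y => C k * y ^ k)
      (g' := fun (k : ℕ) y => C k * ((k : ℝ) * y ^ (k - 1)))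
      (u := fun k : ℕ => 1 / r * ((k : ℝ) * (4 * r) ^ k)) (hgeo1.mul_left (1 / r))
      htopen htconn (fun k y hy => ?_) (fun k y hy => ?_) h0t ?_ hx
    · exact (hasDerivAt_pow k y).const_mul (C k)
    · beta_reduce
      have h1 : |y| ^ (k - 1) ≤ r ^ (k - 1) :=
        pow_le_pow_left₀ (abs_nonneg y) (habs y hy).le (k - 1)
      have h2 : C k ≤ 4 ^ k := cb_le_four_pow k
      cases k with
      | zero => simp
      | succ n =>
        rw [Nat.add_sub_cancel] at h1 ⊢
        rw [norm_mul, norm_mul, norm_pow, Real.norm_eq_abs, Real.norm_eq_abs,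
          Real.norm_eq_abs, abs_of_nonneg (hC0 _).le,
          abs_of_nonneg (by positivity : (0:ℝ) ≤ ((n + 1 : ℕ) : ℝ))]
        have key : 1 / r * (((n + 1 : ℕ) : ℝ) * (4 * r) ^ (n + 1))
            = ((n + 1 : ℕ) : ℝ) * (4 ^ (n + 1) * r ^ n) := by
          rw [mul_pow]; field_simp; ring
        rw [key]
        have hle : C (n + 1) * |y| ^ n ≤ 4 ^ (n + 1) * r ^ n :=
          mul_le_mul h2 h1 (pow_nonneg (abs_nonneg y) n) (by positivity)
        calc C (n + 1) * (((n + 1 : ℕ) : ℝ) * |y| ^ n)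
            = ((n + 1 : ℕ) : ℝ) * (C (n + 1) * |y| ^ n) := by ring
          _ ≤ ((n + 1 : ℕ) : ℝ) * (4 ^ (n + 1) * r ^ n) :=
              mul_le_mul_of_nonneg_left hle (by positivity)
    · exact hS1 0 (by rwa [abs_zero])
  -- derivative of sqrt(1-4x)
  have hsderiv : ∀ x : ℝ, 1 - 4 * x > 0 →
      HasDerivAt (fun y => Real.sqrt (1 - 4 * y)) (-2 / Real.sqrt (1 - 4 * x)) x := by
    intro x hx
    have hinner : HasDerivAt (fun y : ℝ => 1 - 4 * y) (-4) x := by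
      exact (((hasDerivAt_id x).const_mul (4:ℝ)).const_sub (1:ℝ)).congr_deriv (by norm_num)
    have := (Real.hasDerivAt_sqrt (ne_of_gt hx)).comp x hinner
    refine this.congr_deriv ?_
    have hs : Real.sqrt (1 - 4 * x) > 0 := Real.sqrt_pos.2 hx
    field_simp
    ring
  -- P y * sqrt(1-4y) = 1 on [0,u]
  have hpos14 : ∀ x ∈ Icc (0:ℝ) u, (0:ℝ) < 1 - 4 * x := fun x hx => by
    have := hx.2; linarith
  have hP0 : (∑' k : ℕ, C k * (0:ℝ) ^ k) = 1 := by
    rw [tsum_eq_single 0 (fun k hk => by simp [zero_pow hk])]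
    simp [hCdef, Nat.centralBinom]
  have hpsi : ∀ y ∈ Icc (0:ℝ) u,
      (∑' k : ℕ, C k * y ^ k) * Real.sqrt (1 - 4 * y) = 1 := by
    have hconst := constant_of_has_deriv_right_zero
      (f := fun y => (∑' k : ℕ, C k * y ^ k) * Real.sqrt (1 - 4 * y)) (a := 0) (b := u)
      (fun y hy => (((hPderiv y (hmem y hy)).mul
        (hsderiv y (hpos14 y hy))).continuousAt).continuousWithinAt)
      (fun y hy => by
        have hy' : y ∈ Icc (0:ℝ) u := ⟨hy.1, hy.2.le⟩
        have h14 := hpos14 y hy'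
        have hs : Real.sqrt (1 - 4 * y) > 0 := Real.sqrt_pos.2 h14
        have hsq : Real.sqrt (1 - 4 * y) ^ 2 = 1 - 4 * y := Real.sq_sqrt h14.le
        have hode : (1 - 4 * y) * ∑' k : ℕ, C k * ((k : ℝ) * y ^ (k - 1))
            = 2 * ∑' k : ℕ, C k * y ^ k :=
          gf_ode y (hS1 y (habs y (hmem y hy'))) (hS2 y (habs y (hmem y hy')))
        have hD := (hPderiv y (hmem y hy')).mul (hsderiv y h14)
        have hss : Real.sqrt (1 - 4 * y) * Real.sqrt (1 - 4 * y) = 1 - 4 * y :=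
          Real.mul_self_sqrt h14.le
        have hzero : (∑' k : ℕ, C k * ((k : ℝ) * y ^ (k - 1))) * Real.sqrt (1 - 4 * y)
            + (∑' k : ℕ, C k * y ^ k) * (-2 / Real.sqrt (1 - 4 * y)) = 0 := by
          have hdivs : (∑' k : ℕ, C k * y ^ k) * (-2 / Real.sqrt (1 - 4 * y))
              * Real.sqrt (1 - 4 * y) = -2 * ∑' k : ℕ, C k * y ^ k := by
            field_simp
          have h' : ((∑' k : ℕ, C k * ((k : ℝ) * y ^ (k - 1))) * Real.sqrt (1 - 4 * y)
              + (∑' k : ℕ, C k * y ^ k) * (-2 / Real.sqrt (1 - 4 * y)))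
              * Real.sqrt (1 - 4 * y) = 0 := by
            calc ((∑' k : ℕ, C k * ((k : ℝ) * y ^ (k - 1))) * Real.sqrt (1 - 4 * y)
                + (∑' k : ℕ, C k * y ^ k) * (-2 / Real.sqrt (1 - 4 * y)))
                * Real.sqrt (1 - 4 * y)
                = (∑' k : ℕ, C k * ((k : ℝ) * y ^ (k - 1)))
                  * (Real.sqrt (1 - 4 * y) * Real.sqrt (1 - 4 * y))
                  + (∑' k : ℕ, C k * y ^ k) * (-2 / Real.sqrt (1 - 4 * y))
                  * Real.sqrt (1 - 4 * y) := by ring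
              _ = (∑' k : ℕ, C k * ((k : ℝ) * y ^ (k - 1))) * (1 - 4 * y)
                  + -2 * ∑' k : ℕ, C k * y ^ k := by rw [hss, hdivs]
              _ = 0 := by linarith [hode]
          exact (mul_eq_zero.mp h').resolve_right hs.ne'
        rw [hzero] at hD
        exact hD.hasDerivWithinAt)
    intro y hy
    have h : (∑' k : ℕ, C k * y ^ k) * Real.sqrt (1 - 4 * y)
        = (∑' k : ℕ, C k * (0:ℝ) ^ k) * Real.sqrt (1 - 4 * (0:ℝ)) := hconst y hy
    rw [hP0] at h
    norm_num [Real.sqrt_one] at h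
    exact h
  -- value of P on [0,u]
  have hPval : ∀ y ∈ Icc (0:ℝ) u,
      (∑' k : ℕ, C k * y ^ k) = 1 / Real.sqrt (1 - 4 * y) := by
    intro y hy
    have hs : Real.sqrt (1 - 4 * y) > 0 := Real.sqrt_pos.2 (hpos14 y hy)
    field_simp
    exact hpsi y hy
  -- derivative of F
  have hFderiv : ∀ x ∈ Ioo (-r) r,
      HasDerivAt (fun y => ∑' k : ℕ, (if k = 0 then (0:ℝ) else C k * y ^ k / k))
        (∑' k : ℕ, (if k = 0 then (0:ℝ) else C k * x ^ (k - 1))) x := by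
    intro x hx
    refine hasDerivAt_tsum_of_isPreconnected
      (g := fun (k : ℕ) y => if k = 0 then (0:ℝ) else C k * y ^ k / k)
      (g' := fun (k : ℕ) y => if k = 0 then (0:ℝ) else C k * y ^ (k - 1))
      (u := fun k : ℕ => 1 / r * (4 * r) ^ k) (hgeo.mul_left (1 / r))
      htopen htconn (fun k y hy => ?_) (fun k y hy => ?_) h0t ?_ hx
    · cases k with
      | zero => simpa using hasDerivAt_const y (0:ℝ)
      | succ n =>
        simp only [Nat.succ_ne_zero, if_false]
        have h := ((hasDerivAt_pow (n + 1) y).const_mul (C (n + 1))).div_const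
          ((n + 1 : ℕ) : ℝ)
        refine h.congr_deriv ?_
        rw [Nat.add_sub_cancel]
        field_simp
    · cases k with
      | zero => simp; positivity
      | succ n =>
        simp only [Nat.succ_ne_zero, if_false, Nat.add_sub_cancel]
        rw [norm_mul, norm_pow, Real.norm_eq_abs, Real.norm_eq_abs,
          abs_of_nonneg (hC0 _).le]
        have h1 : |y| ^ n ≤ r ^ n := pow_le_pow_left₀ (abs_nonneg y) (habs y hy).le n
        have h2 : C (n + 1) ≤ 4 ^ (n + 1) := cb_le_four_pow (n + 1)
        have key : 1 / r * (4 * r) ^ (n + 1) = 4 ^ (n + 1) * r ^ n := by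
          rw [mul_pow]; field_simp; ring
        rw [key]
        exact mul_le_mul h2 h1 (pow_nonneg (abs_nonneg y) n) (by positivity)
    · apply summable_of_ne_finset_zero (s := (∅ : Finset ℕ))
      intro k _
      cases k with
      | zero => simp
      | succ n => simp
  -- computation of the derivative of F on [0, u)
  have hFd : ∀ x ∈ Ico (0:ℝ) u,
      (∑' k : ℕ, (if k = 0 then (0:ℝ) else C k * x ^ (k - 1)))
        = 4 / (Real.sqrt (1 - 4 * x) * (1 + Real.sqrt (1 - 4 * x))) := by
    intro x hx
    have hx' : x ∈ Icc (0:ℝ) u := ⟨hx.1, hx.2.le⟩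
    have h14 := hpos14 x hx'
    have hs : Real.sqrt (1 - 4 * x) > 0 := Real.sqrt_pos.2 h14
    have hsq : Real.sqrt (1 - 4 * x) ^ 2 = 1 - 4 * x := Real.sq_sqrt h14.le
    rcases eq_or_lt_of_le hx.1 with h0 | h0
    · -- x = 0
      subst h0
      have : (∑' k : ℕ, (if k = 0 then (0:ℝ) else C k * (0:ℝ) ^ (k - 1))) = 2 := by
        rw [tsum_eq_single 1 (fun k hk => ?_)]
        · simp [hCdef, Nat.centralBinom]
        · cases k with
          | zero => simp
          | succ n =>
            have hn : n ≠ 0 := by omega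
            simp [Nat.add_sub_cancel, zero_pow hn]
      rw [this]
      norm_num
    · -- 0 < x
      have hGsum := hS3 x (habs x (hmem x hx'))
      have hrel : (∑' k : ℕ, C k * x ^ k)
          = x * (∑' k : ℕ, (if k = 0 then (0:ℝ) else C k * x ^ (k - 1))) + 1 := by
        have hterm : ∀ k : ℕ, C k * x ^ k
            = x * (if k = 0 then (0:ℝ) else C k * x ^ (k - 1))
              + (if k = 0 then (1:ℝ) else 0) := by
          intro k
          cases k with
          | zero => simp [hCdef, Nat.centralBinom]
          | succ n =>
            simp only [Nat.succ_ne_zero, if_false, Nat.add_sub_cancel, add_zero]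
            rw [pow_succ]
            ring
        calc (∑' k : ℕ, C k * x ^ k)
            = ∑' k : ℕ, (x * (if k = 0 then (0:ℝ) else C k * x ^ (k - 1))
              + (if k = 0 then (1:ℝ) else 0)) := tsum_congr hterm
          _ = x * (∑' k : ℕ, (if k = 0 then (0:ℝ) else C k * x ^ (k - 1))) + 1 := by
              rw [Summable.tsum_add (hGsum.mul_left x) (hasSum_ite_eq 0 (1:ℝ)).summable,
                tsum_mul_left, tsum_ite_eq]
      have hPv := hPval x hx'
      rw [hPv] at hrel
      have hx0 : x ≠ 0 := ne_of_gt h0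
      have h1s : 1 + Real.sqrt (1 - 4 * x) > 0 := by linarith
      -- from hrel : 1/s = x * G + 1, so G = (1 - s)/(x s) = 4/(s (1+s))
      have h4x : (1 - Real.sqrt (1 - 4 * x)) * (1 + Real.sqrt (1 - 4 * x)) = 4 * x := by
        nlinarith [hsq]
      field_simp at hrel ⊢
      nlinarith [hrel, h4x, hs, h1s]
  -- derivative of the target function
  have hTderiv : ∀ x ∈ Icc (0:ℝ) u,
      HasDerivAt (fun y => 2 * Real.log (2 / (1 + Real.sqrt (1 - 4 * y))))
        (4 / (Real.sqrt (1 - 4 * x) * (1 + Real.sqrt (1 - 4 * x)))) x := by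
    intro x hx'
    have h14 := hpos14 x hx'
    have hs : Real.sqrt (1 - 4 * x) > 0 := Real.sqrt_pos.2 h14
    have h1s : (1:ℝ) + Real.sqrt (1 - 4 * x) > 0 := by linarith
    have h1 : HasDerivAt (fun y => 1 + Real.sqrt (1 - 4 * y))
        (-2 / Real.sqrt (1 - 4 * x)) x := (hsderiv x h14).const_add 1
    have h2 : HasDerivAt (fun y => 2 / (1 + Real.sqrt (1 - 4 * y)))
        (2 * (-(-2 / Real.sqrt (1 - 4 * x)) / (1 + Real.sqrt (1 - 4 * x)) ^ 2)) x := by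
      simpa only [div_eq_mul_inv, Pi.inv_apply] using (h1.inv (ne_of_gt h1s)).const_mul (2:ℝ)
    have h3 : (2:ℝ) / (1 + Real.sqrt (1 - 4 * x)) ≠ 0 := by positivity
    have h4 := (h2.log h3).const_mul 2
    refine h4.congr_deriv ?_
    field_simp
    ring
  -- equality of the two functions on [0,u]
  have heq : ∀ y ∈ Icc (0:ℝ) u,
      (∑' k : ℕ, (if k = 0 then (0:ℝ) else C k * y ^ k / k))
        = 2 * Real.log (2 / (1 + Real.sqrt (1 - 4 * y))) := by
    apply eq_of_has_deriv_right_eq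
      (f' := fun x => 4 / (Real.sqrt (1 - 4 * x) * (1 + Real.sqrt (1 - 4 * x))))
    · intro x hx
      have hx' : x ∈ Icc (0:ℝ) u := ⟨hx.1, hx.2.le⟩
      have h := hFderiv x (hmem x hx')
      rw [hFd x hx] at h
      exact h.hasDerivWithinAt
    · exact fun x hx => (hTderiv x ⟨hx.1, hx.2.le⟩).hasDerivWithinAt
    · intro y hy
      exact (hFderiv y (hmem y hy)).continuousAt.continuousWithinAt
    · intro y hy
      exact (hTderiv y hy).continuousAt.continuousWithinAt
    · -- equality at 0
      have hF0 : (∑' k : ℕ, (if k = 0 then (0:ℝ) else C k * (0:ℝ) ^ k / k)) = 0 := by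
        have : (fun k : ℕ => (if k = 0 then (0:ℝ) else C k * (0:ℝ) ^ k / k))
            = fun _ => (0:ℝ) := by
          funext k
          cases k with
          | zero => simp
          | succ n => simp
        rw [this, tsum_zero]
      rw [hF0]
      norm_num
  -- conclude
  have hFu := heq u ⟨hu0.le, le_refl u⟩
  have hsum : Summable fun k : ℕ => (if k = 0 then (0:ℝ) else C k * u ^ k / k) := by
    refine Summable.of_norm_bounded hgeo fun k => ?_
    cases k with
    | zero => simp
    | succ n =>
      simp only [Nat.succ_ne_zero, if_false]
      rw [Real.norm_eq_abs, abs_div, abs_mul, abs_pow, abs_of_nonneg (hC0 _).le,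
        abs_of_nonneg hu0.le, abs_of_nonneg (by positivity : (0:ℝ) ≤ ((n + 1 : ℕ) : ℝ))]
      have hd : C (n + 1) * u ^ (n + 1) / ((n + 1 : ℕ) : ℝ) ≤ C (n + 1) * u ^ (n + 1) := by
        apply div_le_self (by positivity)
        exact_mod_cast Nat.one_le_iff_ne_zero.2 (Nat.succ_ne_zero n)
      refine le_trans hd ?_
      have h1 : u ^ (n + 1) ≤ r ^ (n + 1) := pow_le_pow_left₀ hu0.le hur.le (n + 1)
      have h2 : C (n + 1) ≤ 4 ^ (n + 1) := cb_le_four_pow (n + 1)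
      rw [mul_pow]
      exact mul_le_mul h2 h1 (by positivity) (by positivity)
  have := hsum.hasSum
  rw [hFu] at this
  exact this
end
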